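/- arXiv:2011.04410 — 4 statements merged into one kernel-verified Lean document; each statement's English description precedes it below -/
import Mathlib

section
/- Let r ≥ 2 be an integer and let T_r be an r-regular tree: a connected, acyclic simple graph in which every vertex has degree exactly r, equipped with the graph metric. Then for every vertex v₀ and every natural number d₀, the closed ball A = {v : dist(v₀, v) ≤ d₀} is finite and satisfies 2r² · |AT_{T_r}(A)| = (r² + (r−2)²) · |A|² + 4(r−2) · |A| + 4. -/
/-- The set of 3-term arithmetic progressions, with respect to the graph metric of a
graph `G`, with all entries in the vertex set `A`. -/
def graphAT {V : Type*} (G : SimpleGraph V) (A : Set V) : Set (V × V × V) :=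
  {p | p.1 ∈ A ∧ p.2.1 ∈ A ∧ p.2.2 ∈ A ∧
    G.dist p.1 p.2.1 = G.dist p.2.1 p.2.2 ∧
    2 * G.dist p.1 p.2.1 = G.dist p.1 p.2.2}

section TreeBallAT


open SimpleGraph Walk

variable {V : Type*} {G : SimpleGraph V}

lemma dist_getVert_le (hc : G.Connected) {u v : V} (w : G.Walk u v) (i : ℕ) :
    G.dist u (w.getVert i) ≤ i := by
  induction w generalizing i with
  | nil => simp [Walk.getVert, G.dist_self]
  | cons h p ih =>
    cases i with
    | zero => simp
    | succ i =>
      rw [Walk.getVert_cons_succ]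
      calc G.dist _ _ ≤ G.dist _ _ + G.dist _ _ := hc.dist_triangle
        _ ≤ 1 + i := by
            gcongr
            · exact (SimpleGraph.dist_eq_one_iff_adj.2 h).le
            · exact ih i
        _ = i + 1 := by omega

lemma dist_getVert_eq (hc : G.Connected) {u v : V} {w : G.Walk u v}
    (hw : w.length = G.dist u v) {i : ℕ} (hi : i ≤ w.length) :
    G.dist u (w.getVert i) = i ∧ G.dist (w.getVert i) v = w.length - i := by
  have h1 : G.dist u (w.getVert i) ≤ i := dist_getVert_le hc w i
  have h2 : G.dist (w.getVert i) v ≤ w.length - i := by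
    have := dist_getVert_le hc w.reverse (w.length - i)
    rw [Walk.getVert_reverse, Nat.sub_sub_self hi] at this
    rwa [G.dist_comm]
  have h3 : w.length ≤ G.dist u (w.getVert i) + G.dist (w.getVert i) v := by
    rw [hw]; exact hc.dist_triangle
  omega

lemma dist_add_dist_le_of_mem_support {u v x : V} {p : G.Walk u v} (hx : x ∈ p.support) :
    G.dist u x + G.dist x v ≤ p.length := by
  classical
  have hspec := p.take_spec hx
  have hlen : (p.takeUntil x hx).length + (p.dropUntil x hx).length = p.length := by
    rw [← Walk.length_append, hspec]
  have h1 := G.dist_le (p.takeUntil x hx)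
  have h2 := G.dist_le (p.dropUntil x hx)
  omega

/-- In a tree, adjacent vertices have distances to `v₀` differing by exactly one. -/
lemma adj_dist_diff (htree : G.IsTree) (v₀ : V) {u v : V} (h : G.Adj u v) :
    G.dist v₀ u = G.dist v₀ v + 1 ∨ G.dist v₀ v = G.dist v₀ u + 1 := by
  have hc := htree.isConnected
  have huv : G.dist u v = 1 := SimpleGraph.dist_eq_one_iff_adj.2 h
  have h1 : G.dist v₀ u ≤ G.dist v₀ v + 1 := by
    calc G.dist v₀ u ≤ G.dist v₀ v + G.dist v u := hc.dist_triangle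
      _ = G.dist v₀ v + 1 := by rw [SimpleGraph.dist_comm (u := v) (v := u), huv]
  have h2 : G.dist v₀ v ≤ G.dist v₀ u + 1 := by
    calc G.dist v₀ v ≤ G.dist v₀ u + G.dist u v := hc.dist_triangle
      _ = G.dist v₀ u + 1 := by rw [huv]
  have hne : G.dist v₀ u ≠ G.dist v₀ v := by
    intro heq
    obtain ⟨p, hp, hpl⟩ := hc.exists_path_of_dist u v₀
    obtain ⟨q, hq, hql⟩ := hc.exists_path_of_dist v v₀
    have huq : u ∉ q.support := by
      intro hm
      have := dist_add_dist_le_of_mem_support (p := q) hm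
      rw [hql, SimpleGraph.dist_comm (u := v) (v := v₀), ← heq, SimpleGraph.dist_comm (u := v) (v := u), huv, SimpleGraph.dist_comm (u := u) (v := v₀)] at this
      omega
    have hcons : (Walk.cons h q).IsPath := hq.cons huq
    have huniq := htree.existsUnique_path u v₀
    have : p = Walk.cons h q := (huniq.unique hp hcons)
    have : p.length = q.length + 1 := by rw [this, Walk.length_cons]
    rw [hpl, hql, SimpleGraph.dist_comm (u := u) (v := v₀), SimpleGraph.dist_comm (u := v) (v := v₀), heq] at this
    omega
  omega

lemma exists_parent (hc : G.Connected) {v₀ v : V} {k : ℕ} (hk : G.dist v₀ v = k + 1) :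
    ∃ u, G.Adj v u ∧ G.dist v₀ u = k := by
  obtain ⟨p, hp, hpl⟩ := hc.exists_path_of_dist v v₀
  rw [SimpleGraph.dist_comm (u := v) (v := v₀), hk] at hpl
  refine ⟨p.getVert 1, ?_, ?_⟩
  · have := p.adj_getVert_succ (i := 0) (by omega)
    simpa using this
  · have := (dist_getVert_eq hc (w := p) (by rw [hpl, SimpleGraph.dist_comm (u := v) (v := v₀), hk]) (i := 1) (by omega)).2
    rw [hpl] at this
    rw [SimpleGraph.dist_comm (u := v₀) (v := p.getVert 1), this]
    omega

lemma parent_unique (htree : G.IsTree) {v₀ v u u' : V} {k : ℕ}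
    (hv : G.dist v₀ v = k + 1) (h : G.Adj v u) (h' : G.Adj v u')
    (hu : G.dist v₀ u = k) (hu' : G.dist v₀ u' = k) : u = u' := by
  have hc := htree.isConnected
  obtain ⟨p, hp, hpl⟩ := hc.exists_path_of_dist u v₀
  obtain ⟨q, hq, hql⟩ := hc.exists_path_of_dist u' v₀
  have hvp : v ∉ p.support := by
    intro hm
    have := dist_add_dist_le_of_mem_support (p := p) hm
    rw [hpl, SimpleGraph.dist_comm (u := v) (v := v₀),
      SimpleGraph.dist_comm (u := u) (v := v₀), hv, hu] at this
    omega
  have hvq : v ∉ q.support := by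
    intro hm
    have := dist_add_dist_le_of_mem_support (p := q) hm
    rw [hql, SimpleGraph.dist_comm (u := v) (v := v₀),
      SimpleGraph.dist_comm (u := u') (v := v₀), hv, hu'] at this
    omega
  have h1 : (Walk.cons h p).IsPath := hp.cons hvp
  have h2 : (Walk.cons h' q).IsPath := hq.cons hvq
  have := (htree.existsUnique_path v v₀).unique h1 h2
  have := congrArg (fun w => Walk.getVert w 1) this
  simpa [Walk.getVert_cons] using this

variable {r : ℕ}

lemma children_finite (hreg : ∀ v : V, (G.neighborSet v).ncard = r) (hr : 2 ≤ r)
    (v₀ v : V) : {w | G.Adj v w ∧ G.dist v₀ w = G.dist v₀ v + 1}.Finite := by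
  have hnf : (G.neighborSet v).Finite :=
    Set.finite_of_ncard_ne_zero (by rw [hreg v]; omega)
  exact hnf.subset fun w hw => hw.1

lemma children_card_root (htree : G.IsTree) (hreg : ∀ v : V, (G.neighborSet v).ncard = r)
    (v₀ : V) : {w | G.Adj v₀ w ∧ G.dist v₀ w = G.dist v₀ v₀ + 1}.ncard = r := by
  have : {w | G.Adj v₀ w ∧ G.dist v₀ w = G.dist v₀ v₀ + 1} = G.neighborSet v₀ := by
    ext w
    simp only [Set.mem_setOf_eq, SimpleGraph.mem_neighborSet]
    refine ⟨fun h => h.1, fun h => ⟨h, ?_⟩⟩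
    rcases adj_dist_diff htree v₀ h with h1 | h1
    · rw [SimpleGraph.dist_self] at h1; omega
    · exact h1
  rw [this, hreg]

lemma children_card (htree : G.IsTree) (hreg : ∀ v : V, (G.neighborSet v).ncard = r)
    (hr : 2 ≤ r) (v₀ v : V) {k : ℕ} (hv : G.dist v₀ v = k + 1) :
    {w | G.Adj v w ∧ G.dist v₀ w = G.dist v₀ v + 1}.ncard = r - 1 := by
  have hc := htree.isConnected
  have hnf : (G.neighborSet v).Finite :=
    Set.finite_of_ncard_ne_zero (by rw [hreg v]; omega)
  obtain ⟨u, hadj, hu⟩ := exists_parent hc hv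
  have hset : {w | G.Adj v w ∧ G.dist v₀ w = G.dist v₀ v + 1} = G.neighborSet v \ {u} := by
    ext w
    simp only [Set.mem_setOf_eq, Set.mem_diff, SimpleGraph.mem_neighborSet,
      Set.mem_singleton_iff]
    constructor
    · rintro ⟨h1, h2⟩
      refine ⟨h1, fun hwu => ?_⟩
      subst hwu
      rw [hv] at h2; omega
    · rintro ⟨h1, h2⟩
      refine ⟨h1, ?_⟩
      rcases adj_dist_diff htree v₀ h1 with h3 | h3
      · exfalso
        apply h2
        rw [hv] at h3
        exact parent_unique htree hv h1 hadj (by omega) hu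
      · exact h3
  have hmem : u ∈ G.neighborSet v := hadj
  rw [hset, Set.ncard_diff_singleton_of_mem hmem, hreg]

lemma sphere_step (htree : G.IsTree) (hreg : ∀ v : V, (G.neighborSet v).ncard = r)
    (hr : 2 ≤ r) (v₀ : V) (k : ℕ) (hS : {v | G.dist v₀ v = k}.Finite) :
    {v | G.dist v₀ v = k + 1}.Finite ∧
    {v | G.dist v₀ v = k + 1}.ncard
      = {v | G.dist v₀ v = k}.ncard * (if k = 0 then r else r - 1) := by
  classical
  have hc := htree.isConnected
  set child : V → Set V := fun v => {w | G.Adj v w ∧ G.dist v₀ w = G.dist v₀ v + 1} with hchild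
  have hchf : ∀ v, (child v).Finite := fun v => children_finite hreg hr v₀ v
  set childF : V → Finset V := fun v => (hchf v).toFinset with hchildF
  set F : Finset V := hS.toFinset with hF
  have hmemF : ∀ v, v ∈ F ↔ G.dist v₀ v = k := by
    intro v; rw [hF, Set.Finite.mem_toFinset]; rfl
  have hmemC : ∀ v w, w ∈ childF v ↔ (G.Adj v w ∧ G.dist v₀ w = G.dist v₀ v + 1) := by
    intro v w; rw [hchildF]; simp only [Set.Finite.mem_toFinset]; rfl
  have key : {v | G.dist v₀ v = k + 1} = ↑(F.biUnion childF) := by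
    ext w
    simp only [Set.mem_setOf_eq, Finset.coe_biUnion, Set.mem_iUnion, Finset.mem_coe]
    constructor
    · intro hw
      obtain ⟨u, hadj, hu⟩ := exists_parent hc hw
      exact ⟨u, (hmemF u).2 hu, (hmemC u w).2 ⟨hadj.symm, by rw [hu, hw]⟩⟩
    · rintro ⟨u, hu, hw⟩
      have h1 := (hmemF u).1 hu
      have h2 := (hmemC u w).1 hw
      rw [h2.2, h1]
  have hdisj : ∀ v ∈ F, ∀ v' ∈ F, v ≠ v' → Disjoint (childF v) (childF v') := by
    intro v hv v' hv' hne
    rw [Finset.disjoint_left]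
    intro w hw hw'
    have h1 := (hmemC v w).1 hw
    have h2 := (hmemC v' w).1 hw'
    have hv1 := (hmemF v).1 hv
    have hv2 := (hmemF v').1 hv'
    have hw1 : G.dist v₀ w = k + 1 := by rw [h1.2, hv1]
    exact hne (parent_unique htree hw1 h1.1.symm h2.1.symm hv1 hv2)
  have hcard : ∀ v ∈ F, (childF v).card = (if k = 0 then r else r - 1) := by
    intro v hv
    have hv1 := (hmemF v).1 hv
    have : (childF v).card = (child v).ncard := (Set.ncard_eq_toFinset_card _ (hchf v)).symm
    rw [this]
    rcases Nat.eq_zero_or_pos k with hk | hk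
    · subst hk
      have hv0 : v = v₀ := (hc.dist_eq_zero_iff).1
        (by rw [SimpleGraph.dist_comm (u := v) (v := v₀)]; exact hv1)
      subst hv0
      simp only [if_pos rfl]
      exact children_card_root htree hreg v
    · obtain ⟨j, rfl⟩ := Nat.exists_eq_add_of_lt hk
      rw [if_neg (by omega)]
      exact children_card htree hreg hr v₀ v (k := j) (by omega)
  constructor
  · rw [key]; exact (F.biUnion childF).finite_toSet
  · rw [key, Set.ncard_coe_finset, Finset.card_biUnion hdisj]
    rw [Finset.sum_congr rfl hcard, Finset.sum_const, smul_eq_mul]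
    congr 1
    rw [hF, ← Set.ncard_eq_toFinset_card _ hS]

lemma sphere_card (htree : G.IsTree) (hreg : ∀ v : V, (G.neighborSet v).ncard = r)
    (hr : 2 ≤ r) (v₀ : V) : ∀ k : ℕ, {v | G.dist v₀ v = k}.Finite ∧
      {v | G.dist v₀ v = k}.ncard = if k = 0 then 1 else r * (r - 1) ^ (k - 1) := by
  intro k
  induction k with
  | zero =>
    have h0 : {v | G.dist v₀ v = 0} = {v₀} := by
      ext v
      simp only [Set.mem_setOf_eq, Set.mem_singleton_iff]
      rw [SimpleGraph.dist_comm (u := v₀) (v := v)]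
      exact htree.isConnected.dist_eq_zero_iff
    rw [h0]
    simp
  | succ k ih =>
    obtain ⟨hfin, hcard⟩ := ih
    obtain ⟨hfin', hcard'⟩ := sphere_step htree hreg hr v₀ k hfin
    refine ⟨hfin', ?_⟩
    rw [hcard', hcard]
    rcases Nat.eq_zero_or_pos k with hk | hk
    · subst hk; simp
    · rw [if_neg (by omega), if_neg (by omega), if_neg (by omega)]
      have h2 : k + 1 - 1 = (k - 1) + 1 := by omega
      rw [h2, pow_succ]
      ring

lemma ball_counts (htree : G.IsTree) (hreg : ∀ v : V, (G.neighborSet v).ncard = r)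
    (hr : 2 ≤ r) (v₀ : V) : ∀ d : ℕ,
    {v | G.dist v₀ v ≤ d ∧ Even (G.dist v₀ v)}.Finite ∧
    {v | G.dist v₀ v ≤ d ∧ ¬ Even (G.dist v₀ v)}.Finite ∧
    (({v | G.dist v₀ v ≤ d ∧ Even (G.dist v₀ v)}.ncard : ℤ)
      - {v | G.dist v₀ v ≤ d ∧ ¬ Even (G.dist v₀ v)}.ncard = (-((r : ℤ) - 1)) ^ d) ∧
    (((r : ℤ) - 2) * ({v | G.dist v₀ v ≤ d ∧ Even (G.dist v₀ v)}.ncard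
      + {v | G.dist v₀ v ≤ d ∧ ¬ Even (G.dist v₀ v)}.ncard) + 2 = r * ((r : ℤ) - 1) ^ d) := by
  intro d
  induction d with
  | zero =>
    have h0 : {v | G.dist v₀ v ≤ 0 ∧ Even (G.dist v₀ v)} = {v₀} := by
      ext v
      simp only [Set.mem_setOf_eq, Set.mem_singleton_iff, Nat.le_zero]
      constructor
      · rintro ⟨h1, -⟩
        have := (htree.isConnected.dist_eq_zero_iff (u := v) (v := v₀)).1
          (by rwa [SimpleGraph.dist_comm (u := v) (v := v₀)])
        exact this
      · rintro rfl
        simp [SimpleGraph.dist_self]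
    have h1 : {v | G.dist v₀ v ≤ 0 ∧ ¬ Even (G.dist v₀ v)} = ∅ := by
      ext v
      simp only [Set.mem_setOf_eq, Set.mem_empty_iff_false, iff_false, not_and, Nat.le_zero]
      intro h
      rw [h]
      simp
    rw [h0, h1]
    simp
  | succ d ih =>
    obtain ⟨hE, hO, hdiff, hsum⟩ := ih
    obtain ⟨hSfin, hScard⟩ := sphere_card htree hreg hr v₀ (d + 1)
    rw [if_neg (by omega)] at hScard
    have hsplit : ∀ P : ℕ → Prop, {v | G.dist v₀ v ≤ d + 1 ∧ P (G.dist v₀ v)}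
        = {v | G.dist v₀ v ≤ d ∧ P (G.dist v₀ v)}
          ∪ {v | G.dist v₀ v = d + 1 ∧ P (G.dist v₀ v)} := by
      intro P
      ext v
      simp only [Set.mem_setOf_eq, Set.mem_union]
      constructor
      · rintro ⟨h1, h2⟩
        rcases Nat.lt_or_ge (G.dist v₀ v) (d + 1) with h | h
        · exact Or.inl ⟨by omega, h2⟩
        · exact Or.inr ⟨by omega, h2⟩
      · rintro (⟨h1, h2⟩ | ⟨h1, h2⟩) <;> exact ⟨by omega, h2⟩
    have hdisj : ∀ P : ℕ → Prop, Disjoint {v | G.dist v₀ v ≤ d ∧ P (G.dist v₀ v)}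
        {v | G.dist v₀ v = d + 1 ∧ P (G.dist v₀ v)} := by
      intro P
      rw [Set.disjoint_left]
      rintro v ⟨h1, -⟩ ⟨h2, -⟩
      omega
    rcases Nat.even_or_odd (d + 1) with hpar | hpar
    · -- d+1 even: odd part unchanged, even part gains the sphere
      have heq1 : {v | G.dist v₀ v = d + 1 ∧ Even (G.dist v₀ v)} = {v | G.dist v₀ v = d + 1} := by
        ext v
        simp only [Set.mem_setOf_eq, and_iff_left_iff_imp]
        intro h; rw [h]; exact hpar
      have heq2 : {v | G.dist v₀ v = d + 1 ∧ ¬ Even (G.dist v₀ v)} = ∅ := by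
        ext v
        simp only [Set.mem_setOf_eq, Set.mem_empty_iff_false, iff_false, not_and, not_not]
        intro h; rw [h]; exact hpar
      have hE' := hsplit (fun n => Even n)
      have hO' := hsplit (fun n => ¬ Even n)
      rw [heq1] at hE'
      rw [heq2, Set.union_empty] at hO'
      have hEfin : {v | G.dist v₀ v ≤ d + 1 ∧ Even (G.dist v₀ v)}.Finite := by
        rw [hE']; exact hE.union hSfin
      have hOfin : {v | G.dist v₀ v ≤ d + 1 ∧ ¬ Even (G.dist v₀ v)}.Finite := by
        rw [hO']; exact hO
      have hEcard : {v | G.dist v₀ v ≤ d + 1 ∧ Even (G.dist v₀ v)}.ncard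
          = {v | G.dist v₀ v ≤ d ∧ Even (G.dist v₀ v)}.ncard + r * (r - 1) ^ d := by
        rw [hE', Set.ncard_union_eq (by simpa [heq1] using hdisj (fun n => Even n)) hE hSfin,
          hScard]
        simp
      have hOcard : {v | G.dist v₀ v ≤ d + 1 ∧ ¬ Even (G.dist v₀ v)}.ncard
          = {v | G.dist v₀ v ≤ d ∧ ¬ Even (G.dist v₀ v)}.ncard := by rw [hO']
      refine ⟨hEfin, hOfin, ?_, ?_⟩
      · rw [hEcard, hOcard]
        have hd : Odd d := by rcases hpar with ⟨m, hm⟩; exact ⟨m - 1, by omega⟩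
        have hneg : (-((r : ℤ) - 1)) ^ d = -((r : ℤ) - 1) ^ d := hd.neg_pow _
        have hneg' : (-((r : ℤ) - 1)) ^ (d + 1) = ((r : ℤ) - 1) ^ (d + 1) := hpar.neg_pow _
        rw [hneg] at hdiff
        rw [hneg']
        have hc1 : ((r - 1 : ℕ) : ℤ) = (r : ℤ) - 1 := by
          push_cast [Nat.cast_sub (by omega : 1 ≤ r)]; ring
        push_cast [hc1]
        linear_combination hdiff
      · rw [hEcard, hOcard]
        have hc1 : ((r - 1 : ℕ) : ℤ) = (r : ℤ) - 1 := by
          push_cast [Nat.cast_sub (by omega : 1 ≤ r)]; ring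
        push_cast [hc1]
        linear_combination hsum
    · -- d+1 odd: even part unchanged, odd part gains the sphere
      have hpar' : ¬ Even (d + 1) := by simpa [Nat.not_even_iff_odd] using hpar
      have heq1 : {v | G.dist v₀ v = d + 1 ∧ ¬ Even (G.dist v₀ v)}
          = {v | G.dist v₀ v = d + 1} := by
        ext v
        simp only [Set.mem_setOf_eq, and_iff_left_iff_imp]
        intro h; rw [h]; exact hpar'
      have heq2 : {v | G.dist v₀ v = d + 1 ∧ Even (G.dist v₀ v)} = ∅ := by
        ext v
        simp only [Set.mem_setOf_eq, Set.mem_empty_iff_false, iff_false, not_and]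
        intro h; rw [h]; exact hpar'
      have hE' := hsplit (fun n => Even n)
      have hO' := hsplit (fun n => ¬ Even n)
      rw [heq2, Set.union_empty] at hE'
      rw [heq1] at hO'
      have hEfin : {v | G.dist v₀ v ≤ d + 1 ∧ Even (G.dist v₀ v)}.Finite := by
        rw [hE']; exact hE
      have hOfin : {v | G.dist v₀ v ≤ d + 1 ∧ ¬ Even (G.dist v₀ v)}.Finite := by
        rw [hO']; exact hO.union hSfin
      have hOcard : {v | G.dist v₀ v ≤ d + 1 ∧ ¬ Even (G.dist v₀ v)}.ncard
          = {v | G.dist v₀ v ≤ d ∧ ¬ Even (G.dist v₀ v)}.ncard + r * (r - 1) ^ d := by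
        rw [hO', Set.ncard_union_eq (by rw [← heq1]; exact hdisj (fun n => ¬ Even n)) hO hSfin,
          hScard]
        simp
      have hEcard : {v | G.dist v₀ v ≤ d + 1 ∧ Even (G.dist v₀ v)}.ncard
          = {v | G.dist v₀ v ≤ d ∧ Even (G.dist v₀ v)}.ncard := by rw [hE']
      refine ⟨hEfin, hOfin, ?_, ?_⟩
      · rw [hEcard, hOcard]
        have hd : Even d := by rcases hpar with ⟨m, hm⟩; exact ⟨m, by omega⟩
        have hneg : (-((r : ℤ) - 1)) ^ d = ((r : ℤ) - 1) ^ d := hd.neg_pow _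
        have hneg' : (-((r : ℤ) - 1)) ^ (d + 1) = -((r : ℤ) - 1) ^ (d + 1) :=
          hpar.neg_pow _
        rw [hneg] at hdiff
        rw [hneg']
        have hc1 : ((r - 1 : ℕ) : ℤ) = (r : ℤ) - 1 := by
          push_cast [Nat.cast_sub (by omega : 1 ≤ r)]; ring
        push_cast [hc1]
        linear_combination hdiff
      · rw [hEcard, hOcard]
        have hc1 : ((r - 1 : ℕ) : ℤ) = (r : ℤ) - 1 := by
          push_cast [Nat.cast_sub (by omega : 1 ≤ r)]; ring
        push_cast [hc1]
        linear_combination hsum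

/-- ±1-step sequences without interior local maxima are bounded by their endpoints. -/
lemma updown_bound (f : ℕ → ℕ) (L : ℕ)
    (hstep : ∀ i, i < L → f (i + 1) = f i + 1 ∨ f i = f (i + 1) + 1)
    (hnomax : ∀ i, 0 < i → i < L → f (i - 1) + 1 = f i → f i = f (i + 1) + 1 → False) :
    ∀ i, i ≤ L → f i ≤ max (f 0) (f L) := by
  have hup : ∀ k, k < L → f (k + 1) = f k + 1 →
      ∀ j, k ≤ j → j < L → f (j + 1) = f j + 1 := by
    intro k hk hfk j hkj hjL
    induction j with
    | zero =>
      have : k = 0 := by omega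
      subst this; exact hfk
    | succ j ih =>
      rcases Nat.lt_or_ge k (j + 1) with h | h
      · have hj : f (j + 1) = f j + 1 := ih (by omega) (by omega)
        rcases hstep (j + 1) hjL with h' | h'
        · exact h'
        · exact absurd h' (fun h' => hnomax (j + 1) (by omega) hjL (by simp only [Nat.add_sub_cancel]; omega) h')
      · have : k = j + 1 := by omega
        subst this; exact hfk
  intro i hi
  by_cases hex : ∃ k, k < i ∧ f (k + 1) = f k + 1
  · obtain ⟨k, hk, hkstep⟩ := hex
    have hkL : k < L := by omega
    have hmono : ∀ t, i + t ≤ L → f i ≤ f (i + t) := by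
      intro t
      induction t with
      | zero => simp
      | succ t ih =>
        intro ht
        have h1 : f i ≤ f (i + t) := ih (by omega)
        have h2 : f (i + t + 1) = f (i + t) + 1 :=
          hup k hkL hkstep (i + t) (by omega) (by omega)
        have h3 : i + (t + 1) = i + t + 1 := by omega
        rw [h3]
        omega
    have := hmono (L - i) (by omega)
    rw [show i + (L - i) = L by omega] at this
    omega
  · push_neg at hex
    have hdown : ∀ j, j ≤ i → f j + j = f 0 := by
      intro j hj
      induction j with
      | zero => simp
      | succ j ih =>
        have h1 : f j + j = f 0 := ih (by omega)
        have h2 : f j = f (j + 1) + 1 := by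
          rcases hstep j (by omega) with h | h
          · exact absurd h (by have := hex j (by omega); omega)
          · exact h
        omega
    have := hdown i le_rfl
    omega

/-- In a tree, every path realizes the distance between its endpoints. -/
lemma isPath_length_eq_dist (htree : G.IsTree) {a c : V} (p : G.Walk a c)
    (hp : p.IsPath) : p.length = G.dist a c := by
  obtain ⟨q, hq, hql⟩ := htree.isConnected.exists_path_of_dist a c
  rw [(htree.existsUnique_path a c).unique hp hq, hql]

lemma midpoint_spec (htree : G.IsTree) (v₀ : V) {a c : V} {m : ℕ}
    (h : G.dist a c = 2 * m) :
    ∃ b, G.dist a b = m ∧ G.dist b c = m ∧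
      G.dist v₀ b ≤ max (G.dist v₀ a) (G.dist v₀ c) ∧
      ∀ b', G.dist a b' = m → G.dist b' c = m → b' = b := by
  have hc := htree.isConnected
  obtain ⟨p, hp, hpl⟩ := hc.exists_path_of_dist a c
  have hplen : p.length = 2 * m := by rw [hpl, h]
  refine ⟨p.getVert m, ?_, ?_, ?_, ?_⟩
  · exact (dist_getVert_eq hc hpl (by omega)).1
  · have := (dist_getVert_eq hc hpl (i := m) (by omega)).2
    rw [this, hplen]
    omega
  · -- ball bound via updown_bound
    set f : ℕ → ℕ := fun i => G.dist v₀ (p.getVert i) with hf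
    have hstep : ∀ i, i < p.length → f (i + 1) = f i + 1 ∨ f i = f (i + 1) + 1 := by
      intro i hi
      have hadj := p.adj_getVert_succ hi
      rcases adj_dist_diff htree v₀ hadj with h1 | h1
      · exact Or.inr h1
      · exact Or.inl h1
    have hnomax : ∀ i, 0 < i → i < p.length →
        f (i - 1) + 1 = f i → f i = f (i + 1) + 1 → False := by
      intro i h0 hL h1 h2
      have hadj1 : G.Adj (p.getVert i) (p.getVert (i - 1)) := by
        have := p.adj_getVert_succ (i := i - 1) (by omega)
        rw [show i - 1 + 1 = i by omega] at this
        exact this.symm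
      have hadj2 : G.Adj (p.getVert i) (p.getVert (i + 1)) := p.adj_getVert_succ hL
      have hk : G.dist v₀ (p.getVert i) = f (i + 1) + 1 := h2
      have heq : p.getVert (i - 1) = p.getVert (i + 1) :=
        parent_unique htree hk hadj1 hadj2 (by simp only [hf] at h1 h2 ⊢; omega) rfl
      have d1 := (dist_getVert_eq hc hpl (i := i - 1) (by omega)).1
      have d2 := (dist_getVert_eq hc hpl (i := i + 1) (by omega)).1
      rw [heq] at d1
      omega
    have := updown_bound f p.length hstep hnomax m (by omega)
    simpa [hf, Walk.getVert_zero, Walk.getVert_length] using this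
  · -- uniqueness
    intro b' h1 h2
    obtain ⟨q1, hq1, hq1l⟩ := hc.exists_path_of_dist a b'
    obtain ⟨q2, hq2, hq2l⟩ := hc.exists_path_of_dist b' c
    rw [h1] at hq1l
    rw [h2] at hq2l
    have hint : ∀ x, x ∈ q1.support → x ∈ q2.support → x = b' := by
      intro x hx1 hx2
      obtain ⟨i, hxi, hi⟩ := Walk.mem_support_iff_exists_getVert.1 hx1
      obtain ⟨j, hxj, hj⟩ := Walk.mem_support_iff_exists_getVert.1 hx2
      have e1 := dist_getVert_eq hc (by rw [hq1l, h1]) (i := i) hi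
      have e2 := dist_getVert_eq hc (by rw [hq2l, h2]) (i := j) hj
      rw [hxi] at e1
      rw [hxj] at e2
      -- e1 : dist a x = i ∧ dist x b' = m - i ; e2 : dist b' x = j ∧ dist x c = m - j
      have hcomm : G.dist x b' = G.dist b' x := SimpleGraph.dist_comm
      have htri : G.dist a c ≤ G.dist a x + G.dist x c := hc.dist_triangle
      rw [hq1l] at e1
      rw [hq2l] at e2
      have him : i = m := by omega
      rw [← hxi, him]
      have : q1.getVert m = q1.getVert q1.length := by rw [hq1l]
      rw [this, Walk.getVert_length]
    have hpath : (q1.append q2).IsPath := by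
      rw [Walk.isPath_def, Walk.support_append]
      have h1' := hq1.support_nodup
      have hcons : q2.support = b' :: q2.support.tail := q2.support_eq_cons
      have h2' := hq2.support_nodup
      rw [hcons, List.nodup_cons] at h2'
      refine List.Nodup.append h1' h2'.2 ?_
      intro x hx1 hx2
      have hx2' : x ∈ q2.support := by rw [hcons]; exact List.mem_cons_of_mem _ hx2
      have := hint x hx1 hx2'
      subst this
      exact h2'.1 hx2
    have hpeq : q1.append q2 = p := (htree.existsUnique_path a c).unique hpath hp
    have hb'mem : b' ∈ p.support := by
      rw [← hpeq]
      exact (Walk.mem_support_append_iff q1 q2).2 (Or.inl q1.end_mem_support)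
    obtain ⟨i, hxi, hi⟩ := Walk.mem_support_iff_exists_getVert.1 hb'mem
    have e1 := (dist_getVert_eq hc hpl (i := i) hi).1
    rw [hxi] at e1
    rw [← hxi, show i = m by omega]

lemma walk_parity (htree : G.IsTree) (v₀ : V) {u v : V} (w : G.Walk u v) :
    (w.length + G.dist v₀ u + G.dist v₀ v) % 2 = 0 := by
  induction w with
  | nil =>
    rw [Walk.length_nil]
    omega
  | cons hadj p ih =>
    rw [Walk.length_cons]
    rcases adj_dist_diff htree v₀ hadj with h1 | h1 <;> omega

lemma dist_parity (htree : G.IsTree) (v₀ : V) (u v : V) :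
    (G.dist u v + G.dist v₀ u + G.dist v₀ v) % 2 = 0 := by
  obtain ⟨p, hp, hpl⟩ := htree.isConnected.exists_path_of_dist u v
  have := walk_parity htree v₀ p
  rw [hpl] at this
  exact this

lemma ncard_sprod {α β : Type*} (s : Set α) (t : Set β) :
    (s ×ˢ t).ncard = s.ncard * t.ncard := by
  rw [← Nat.card_coe_set_eq, ← Nat.card_coe_set_eq, ← Nat.card_coe_set_eq,
    Nat.card_congr (Equiv.Set.prod s t), Nat.card_prod]

lemma AT_card (htree : G.IsTree) (v₀ : V) (d : ℕ)
    (hE : {v | G.dist v₀ v ≤ d ∧ Even (G.dist v₀ v)}.Finite)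
    (hO : {v | G.dist v₀ v ≤ d ∧ ¬ Even (G.dist v₀ v)}.Finite) :
    (graphAT G {v : V | G.dist v₀ v ≤ d}).ncard
      = {v | G.dist v₀ v ≤ d ∧ Even (G.dist v₀ v)}.ncard ^ 2
        + {v | G.dist v₀ v ≤ d ∧ ¬ Even (G.dist v₀ v)}.ncard ^ 2 := by
  have hc := htree.isConnected
  set SE := {v | G.dist v₀ v ≤ d ∧ Even (G.dist v₀ v)} with hSE
  set SO := {v | G.dist v₀ v ≤ d ∧ ¬ Even (G.dist v₀ v)} with hSO
  set A := {v : V | G.dist v₀ v ≤ d} with hA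
  set F : V × V × V → V × V := fun p => (p.1, p.2.2) with hF
  have himg : F '' (graphAT G A) = (SE ×ˢ SE) ∪ (SO ×ˢ SO) := by
    ext x
    constructor
    · rintro ⟨⟨a, b, c⟩, ⟨ha, hb, hcm, heq, hsum⟩, rfl⟩
      show (a, c) ∈ _
      dsimp only at ha hb hcm heq hsum
      have hpar := dist_parity htree v₀ a c
      have hev : (G.dist v₀ a + G.dist v₀ c) % 2 = 0 := by omega
      rcases Nat.even_or_odd (G.dist v₀ a) with he | he
      · have he' : Even (G.dist v₀ c) := by
          rw [Nat.even_iff] at he ⊢; omega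
        exact Or.inl ⟨⟨ha, he⟩, ⟨hcm, he'⟩⟩
      · have he2 : ¬ Even (G.dist v₀ a) := by simpa [Nat.not_even_iff_odd] using he
        have he' : ¬ Even (G.dist v₀ c) := by
          rw [Nat.even_iff] at he2 ⊢; rw [Nat.odd_iff] at he; omega
        exact Or.inr ⟨⟨ha, he2⟩, ⟨hcm, he'⟩⟩
    · intro hmem
      obtain ⟨a, c⟩ := x
      simp only [Set.mem_union, Set.mem_prod, hSE, hSO, Set.mem_setOf_eq] at hmem
      have hac : G.dist v₀ a ≤ d ∧ G.dist v₀ c ≤ d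
          ∧ (G.dist v₀ a + G.dist v₀ c) % 2 = 0 := by
        rcases hmem with ⟨⟨h1, h2⟩, ⟨h3, h4⟩⟩ | ⟨⟨h1, h2⟩, ⟨h3, h4⟩⟩ <;>
          rw [Nat.even_iff] at h2 h4 <;> exact ⟨h1, h3, by omega⟩
      obtain ⟨ha, hcm, hpar2⟩ := hac
      have haA : a ∈ A := ha
      have hcA : c ∈ A := hcm
      have hpar := dist_parity htree v₀ a c
      have hevd : G.dist a c % 2 = 0 := by omega
      obtain ⟨m, hm⟩ : ∃ m, G.dist a c = 2 * m := ⟨G.dist a c / 2, by omega⟩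
      obtain ⟨b, hb1, hb2, hb3, -⟩ := midpoint_spec htree v₀ hm
      refine ⟨(a, b, c), ⟨haA, ?_, hcA, by dsimp only; rw [hb1, hb2], by dsimp only; rw [hb1, hm]⟩, rfl⟩
      show G.dist v₀ b ≤ d
      have hmax : max (G.dist v₀ a) (G.dist v₀ c) ≤ d := by omega
      exact le_trans hb3 hmax
  have hinj : Set.InjOn F (graphAT G A) := by
    rintro ⟨a, b, c⟩ ⟨ha, hb, hcm, heq, hsum⟩ ⟨a', b', c'⟩ ⟨ha', hb', hcm', heq', hsum'⟩ hFeq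
    have h1 : a = a' := congrArg Prod.fst hFeq
    have h2 : c = c' := congrArg Prod.snd hFeq
    subst h1 h2
    dsimp only at heq hsum heq' hsum'
    have hm : G.dist a c = 2 * G.dist a b := hsum.symm
    obtain ⟨b₀, -, -, -, huniq⟩ := midpoint_spec htree v₀ hm
    have hb0 : b = b₀ := huniq b rfl (by omega)
    have hmm : G.dist a b' = G.dist a b := by omega
    have hb0' : b' = b₀ := huniq b' hmm (by omega)
    rw [hb0, hb0']
  have hdisj : Disjoint (SE ×ˢ SE) (SO ×ˢ SO) := by
    rw [Set.disjoint_left]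
    rintro ⟨x, y⟩ ⟨⟨-, h1⟩, -⟩ ⟨⟨-, h2⟩, -⟩
    exact h2 h1
  calc (graphAT G A).ncard = (F '' (graphAT G A)).ncard :=
        (Set.ncard_image_of_injOn hinj).symm
    _ = ((SE ×ˢ SE) ∪ (SO ×ˢ SO)).ncard := by rw [himg]
    _ = (SE ×ˢ SE).ncard + (SO ×ˢ SO).ncard :=
        Set.ncard_union_eq hdisj (hE.prod hE) (hO.prod hO)
    _ = SE.ncard ^ 2 + SO.ncard ^ 2 := by
        rw [ncard_sprod, ncard_sprod, sq, sq]


end TreeBallAT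

/-- In an `r`-regular tree (`r ≥ 2`), every closed ball `A` of radius `d₀` around a
vertex `v₀` is finite and satisfies
`2r²·|AT(A)| = (r² + (r−2)²)·|A|² + 4(r−2)·|A| + 4`. -/
theorem tree_ball_AT {V : Type*} (G : SimpleGraph V) (r : ℕ) (hr : 2 ≤ r)
    (htree : G.IsTree) (hreg : ∀ v : V, (G.neighborSet v).ncard = r)
    (v₀ : V) (d₀ : ℕ) :
    {v : V | G.dist v₀ v ≤ d₀}.Finite ∧
    2 * r ^ 2 * (graphAT G {v : V | G.dist v₀ v ≤ d₀}).ncard =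
      (r ^ 2 + (r - 2) ^ 2) * {v : V | G.dist v₀ v ≤ d₀}.ncard ^ 2 +
        4 * (r - 2) * {v : V | G.dist v₀ v ≤ d₀}.ncard + 4 := by
  obtain ⟨hE, hO, hdiff, hsum⟩ := ball_counts htree hreg hr v₀ d₀
  have hsplit : {v : V | G.dist v₀ v ≤ d₀}
      = {v | G.dist v₀ v ≤ d₀ ∧ Even (G.dist v₀ v)}
        ∪ {v | G.dist v₀ v ≤ d₀ ∧ ¬ Even (G.dist v₀ v)} := by
    ext v
    simp only [Set.mem_setOf_eq, Set.mem_union]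
    by_cases h : Even (G.dist v₀ v) <;> tauto
  have hAfin : {v : V | G.dist v₀ v ≤ d₀}.Finite := by
    rw [hsplit]; exact hE.union hO
  refine ⟨hAfin, ?_⟩
  have hdisj : Disjoint {v | G.dist v₀ v ≤ d₀ ∧ Even (G.dist v₀ v)}
      {v | G.dist v₀ v ≤ d₀ ∧ ¬ Even (G.dist v₀ v)} := by
    rw [Set.disjoint_left]
    rintro v ⟨-, h1⟩ ⟨-, h2⟩
    exact h2 h1
  have hn : {v : V | G.dist v₀ v ≤ d₀}.ncard
      = {v | G.dist v₀ v ≤ d₀ ∧ Even (G.dist v₀ v)}.ncard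
        + {v | G.dist v₀ v ≤ d₀ ∧ ¬ Even (G.dist v₀ v)}.ncard := by
    rw [hsplit, Set.ncard_union_eq hdisj hE hO]
  have hT := AT_card htree v₀ d₀ hE hO
  rw [hT, hn]
  set E := {v | G.dist v₀ v ≤ d₀ ∧ Even (G.dist v₀ v)}.ncard
  set O := {v | G.dist v₀ v ≤ d₀ ∧ ¬ Even (G.dist v₀ v)}.ncard
  zify [hr]
  have hq : (-((r : ℤ) - 1)) ^ d₀ * (-((r : ℤ) - 1)) ^ d₀
      = ((r : ℤ) - 1) ^ d₀ * ((r : ℤ) - 1) ^ d₀ := by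
    rw [← mul_pow, neg_mul_neg, mul_pow]
  linear_combination ((r : ℤ) ^ 2 * (((E : ℤ) - O) + (-((r : ℤ) - 1)) ^ d₀)) * hdiff
    + (r : ℤ) ^ 2 * hq
    - ((r : ℤ) * ((r : ℤ) - 1) ^ d₀ + (((r : ℤ) - 2) * ((E : ℤ) + O) + 2)) * hsum
end

section
/- Let ℓ ≥ 1 be an integer and consider ℤ^ℓ with the ℓ¹ (lattice graph) metric d(a,b) = Σ_{i=1}^{ℓ} |a_i − b_i|. There exists a constant c_ℓ > 0 such that for every positive integer n, μ_n(ℤ^ℓ) ≥ c_ℓ · n^{3 − 1/ℓ}. -/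
/-- The `ℓ¹` (lattice graph) distance on `ℤ^ℓ`. -/
def latticeDist {ℓ : ℕ} (a b : Fin ℓ → ℤ) : ℤ :=
  ∑ i, |a i - b i|

/-- The set of 3-term arithmetic progressions, with respect to the `ℓ¹` distance on
`ℤ^ℓ`, with all entries in `A`. -/
def latticeAT {ℓ : ℕ} (A : Set (Fin ℓ → ℤ)) :
    Set ((Fin ℓ → ℤ) × (Fin ℓ → ℤ) × (Fin ℓ → ℤ)) :=
  {p | p.1 ∈ A ∧ p.2.1 ∈ A ∧ p.2.2 ∈ A ∧
    latticeDist p.1 p.2.1 = latticeDist p.2.1 p.2.2 ∧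
    2 * latticeDist p.1 p.2.1 = latticeDist p.1 p.2.2}

open Finset

private def uval {ℓ : ℕ} (i0 : Fin ℓ) (t u : Fin ℓ → ℤ) : Fin ℓ → ℤ :=
  fun i => if i = i0 then (∑ j, t j) - ∑ j ∈ Finset.univ.erase i0, u j else u i

private lemma sum_uval {ℓ : ℕ} (i0 : Fin ℓ) (t u : Fin ℓ → ℤ) :
    ∑ i, uval i0 t u i = ∑ i, t i := by
  rw [← Finset.add_sum_erase _ _ (Finset.mem_univ i0)]
  have h1 : uval i0 t u i0 = (∑ j, t j) - ∑ j ∈ Finset.univ.erase i0, u j := by simp [uval]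
  have h2 : ∑ i ∈ Finset.univ.erase i0, uval i0 t u i = ∑ i ∈ Finset.univ.erase i0, u i := by
    refine Finset.sum_congr rfl fun i hi => ?_
    simp [uval, Finset.ne_of_mem_erase hi]
  rw [h1, h2]; ring

private lemma latticeDist_self {ℓ : ℕ} (a : Fin ℓ → ℤ) : latticeDist a a = 0 := by
  simp [latticeDist]

private lemma latticeDist_add {ℓ : ℕ} (a t : Fin ℓ → ℤ) (ht : ∀ i, 0 ≤ t i) :
    latticeDist a (a + t) = ∑ i, t i := by
  unfold latticeDist
  refine Finset.sum_congr rfl fun i _ => ?_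
  rw [Pi.add_apply, show a i - (a i + t i) = -(t i) by ring, abs_neg, abs_of_nonneg (ht i)]

private lemma lattice_construction (ℓ m n : ℕ) (hℓ : 1 ≤ ℓ) (hn : (3*ℓ*m)^ℓ ≤ n) :
    ∃ A : Set (Fin ℓ → ℤ), A.Finite ∧ A.ncard = n ∧
      n ≤ (latticeAT A).ncard ∧ m ^ (3*ℓ-1) ≤ (latticeAT A).ncard := by
  have hℓ0 : 0 < ℓ := hℓ
  set i0 : Fin ℓ := ⟨0, hℓ0⟩ with hi0
  set s : ℕ := 3*ℓ*m with hs
  -- the box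
  set Box : Finset (Fin ℓ → ℤ) := Fintype.piFinset (fun _ => Finset.Ico (0:ℤ) (s:ℤ)) with hBox
  have hBoxcard : Box.card = s ^ ℓ := by
    rw [hBox, Fintype.card_piFinset]
    simp
  -- extra points to pad out the cardinality
  set e : ℕ := n - s^ℓ with he
  set Extra : Finset (Fin ℓ → ℤ) :=
    (Finset.range e).image (fun j => fun i => if i = i0 then ((s + j : ℕ) : ℤ) else 0) with hExtra
  have hExtracard : Extra.card = e := by
    rw [hExtra, Finset.card_image_of_injOn, Finset.card_range]
    intro j _ j' _ hjj
    have := congrFun hjj i0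
    simpa using this
  have hdisj : Disjoint Box Extra := by
    rw [Finset.disjoint_left]
    intro x hx hx'
    rw [hBox, Fintype.mem_piFinset] at hx
    have h1 := (Finset.mem_Ico.mp (hx i0)).2
    rw [hExtra, Finset.mem_image] at hx'
    obtain ⟨j, _, rfl⟩ := hx'
    simp only [if_pos rfl] at h1
    push_cast at h1
    omega
  set F : Finset (Fin ℓ → ℤ) := Box ∪ Extra with hF
  have hFcard : F.card = n := by
    rw [hF, Finset.card_union_of_disjoint hdisj, hBoxcard, hExtracard, he]
    omega
  have hATfin : (latticeAT (↑F : Set (Fin ℓ → ℤ))).Finite := by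
    apply Set.Finite.subset (F.finite_toSet.prod (F.finite_toSet.prod F.finite_toSet))
    rintro ⟨x, y, z⟩ ⟨h1, h2, h3, -⟩
    exact ⟨h1, h2, h3⟩
  refine ⟨↑F, F.finite_toSet, by rw [Set.ncard_coe_finset, hFcard], ?_, ?_⟩
  · -- diagonal bound
    have hinj : Set.InjOn (fun x => (x,x,x)) (↑F : Set (Fin ℓ → ℤ)) := by
      intro x _ y _ h
      exact (Prod.ext_iff.mp h).1
    have hsub : (fun x => (x,x,x)) '' (↑F : Set (Fin ℓ → ℤ)) ⊆ latticeAT (↑F : Set (Fin ℓ → ℤ)) := by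
      rintro _ ⟨x, hx, rfl⟩
      exact ⟨hx, hx, hx, rfl, by rw [latticeDist_self]; ring⟩
    calc n = F.card := hFcard.symm
      _ = (↑F : Set (Fin ℓ → ℤ)).ncard := (Set.ncard_coe_finset F).symm
      _ = ((fun x => (x,x,x)) '' ↑F).ncard := (Set.ncard_image_of_injOn hinj).symm
      _ ≤ _ := Set.ncard_le_ncard hsub hATfin
  · -- main construction
    set TA : Finset (Fin ℓ → ℤ) := Fintype.piFinset (fun _ => Finset.Ico (0:ℤ) (m:ℤ)) with hTA
    set TT : Finset (Fin ℓ → ℤ) := Fintype.piFinset (fun i =>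
        if i = i0 then Finset.Ico (((ℓ:ℤ)-1)*(m:ℤ)) ((ℓ:ℤ)*(m:ℤ)) else Finset.Ico 0 (m:ℤ)) with hTT
    set TU : Finset (Fin ℓ → ℤ) := Fintype.piFinset (fun i =>
        if i = i0 then Finset.Ico (0:ℤ) 1 else Finset.Ico 0 (m:ℤ)) with hTU
    have hTAcard : TA.card = m ^ ℓ := by rw [hTA, Fintype.card_piFinset]; simp
    have hTTcard : TT.card = m ^ ℓ := by
      rw [hTT, Fintype.card_piFinset]
      have hc : ∀ i : Fin ℓ, ((if i = i0 then Finset.Ico (((ℓ:ℤ)-1)*(m:ℤ)) ((ℓ:ℤ)*(m:ℤ))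
          else Finset.Ico 0 (m:ℤ))).card = m := by
        intro i
        split
        · rw [Int.card_Ico, show (ℓ:ℤ)*(m:ℤ) - ((ℓ:ℤ)-1)*(m:ℤ) = (m:ℤ) by ring]; simp
        · rw [Int.card_Ico]; simp
      simp only [hc]
      simp
    have hcarderase : (Finset.univ.erase i0).card = ℓ - 1 := by
      rw [Finset.card_erase_of_mem (Finset.mem_univ i0), Finset.card_univ, Fintype.card_fin]
    have hTUcard : TU.card = m ^ (ℓ - 1) := by
      rw [hTU, Fintype.card_piFinset, ← Finset.mul_prod_erase _ _ (Finset.mem_univ i0), if_pos rfl]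
      have h2 : ∀ i ∈ Finset.univ.erase i0,
          ((if i = i0 then Finset.Ico (0:ℤ) 1 else Finset.Ico 0 (m:ℤ))).card = m := by
        intro i hi
        rw [if_neg (Finset.ne_of_mem_erase hi), Int.card_Ico]; simp
      rw [Finset.prod_congr rfl h2, Finset.prod_const, hcarderase]
      simp
    set D := TA ×ˢ (TT ×ˢ TU) with hD
    have hDcard : D.card = m ^ (3*ℓ-1) := by
      rw [hD, Finset.card_product, Finset.card_product, hTAcard, hTTcard, hTUcard,
        ← pow_add, ← pow_add]
      congr 1
      omega
    set G : (Fin ℓ → ℤ) × (Fin ℓ → ℤ) × (Fin ℓ → ℤ) → (Fin ℓ → ℤ) × (Fin ℓ → ℤ) × (Fin ℓ → ℤ) :=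
      fun p => (p.1, p.1 + p.2.1, p.1 + p.2.1 + uval i0 p.2.1 p.2.2) with hG
    have hu0zero : ∀ u : Fin ℓ → ℤ, u ∈ TU → u i0 = 0 := by
      intro u hu
      rw [hTU, Fintype.mem_piFinset] at hu
      have := hu i0
      rw [if_pos rfl, Finset.mem_Ico] at this
      omega
    have hinj : Set.InjOn G ↑D := by
      rintro ⟨a, t, u⟩ hp ⟨a', t', u'⟩ hq hpq
      rw [Finset.mem_coe, hD] at hp hq
      simp only [Finset.mem_product] at hp hq
      simp only [hG, Prod.mk.injEq] at hpq
      obtain ⟨h1, h2, h3⟩ := hpq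
      subst h1
      have ht : t = t' := by
        funext i
        have := congrFun h2 i
        simp only [Pi.add_apply] at this
        omega
      subst ht
      have hu : u = u' := by
        funext i
        by_cases hii : i = i0
        · subst hii
          rw [hu0zero u hp.2.2, hu0zero u' hq.2.2]
        · have h3i := congrFun h3 i
          simp only [Pi.add_apply, uval, if_neg hii] at h3i
          omega
      rw [hu]
    have hGsub : ∀ p ∈ D, G p ∈ latticeAT (↑F : Set (Fin ℓ → ℤ)) := by
      rintro ⟨a, t, u⟩ hp
      rw [hD] at hp
      simp only [Finset.mem_product] at hp
      obtain ⟨ha, ht, hu⟩ := hp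
      rw [hTA, Fintype.mem_piFinset] at ha
      rw [hTT, Fintype.mem_piFinset] at ht
      rw [hTU, Fintype.mem_piFinset] at hu
      have hmZ : (0:ℤ) ≤ (m:ℤ) := Int.natCast_nonneg m
      have hℓZ : (1:ℤ) ≤ (ℓ:ℤ) := by exact_mod_cast hℓ
      have hm1 : (0:ℤ) ≤ ((ℓ:ℤ)-1)*(m:ℤ) := mul_nonneg (by linarith) hmZ
      have ha' : ∀ i, 0 ≤ a i ∧ a i < (m:ℤ) := by
        intro i; have := ha i; rwa [Finset.mem_Ico] at this
      have ht0 : ((ℓ:ℤ)-1)*(m:ℤ) ≤ t i0 ∧ t i0 < (ℓ:ℤ)*(m:ℤ) := by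
        have := ht i0; rwa [if_pos rfl, Finset.mem_Ico] at this
      have ht' : ∀ i, i ≠ i0 → 0 ≤ t i ∧ t i < (m:ℤ) := by
        intro i hi; have := ht i; rwa [if_neg hi, Finset.mem_Ico] at this
      have hu' : ∀ i, i ≠ i0 → 0 ≤ u i ∧ u i < (m:ℤ) := by
        intro i hi; have := hu i; rwa [if_neg hi, Finset.mem_Ico] at this
      have htnn : ∀ i, 0 ≤ t i := by
        intro i
        by_cases hi : i = i0
        · subst hi; linarith [ht0.1]
        · exact (ht' i hi).1
      have hsum_t_lb : 0 ≤ ∑ j ∈ Finset.univ.erase i0, t j :=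
        Finset.sum_nonneg fun i _ => htnn i
      have hcast : ((ℓ - 1 : ℕ) : ℤ) = (ℓ:ℤ) - 1 := by
        rw [Nat.cast_sub hℓ]; simp
      have hsum_t_ub : ∑ j ∈ Finset.univ.erase i0, t j ≤ ((ℓ:ℤ)-1)*(m:ℤ) := by
        calc ∑ j ∈ Finset.univ.erase i0, t j ≤ ∑ _j ∈ Finset.univ.erase i0, (m:ℤ) :=
              Finset.sum_le_sum fun i hi => le_of_lt (ht' i (Finset.ne_of_mem_erase hi)).2
          _ = ((ℓ:ℤ)-1)*(m:ℤ) := by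
              rw [Finset.sum_const, hcarderase, nsmul_eq_mul, hcast]
      have hsum_u_lb : 0 ≤ ∑ j ∈ Finset.univ.erase i0, u j :=
        Finset.sum_nonneg fun i hi => (hu' i (Finset.ne_of_mem_erase hi)).1
      have hsum_u_ub : ∑ j ∈ Finset.univ.erase i0, u j ≤ ((ℓ:ℤ)-1)*(m:ℤ) := by
        calc ∑ j ∈ Finset.univ.erase i0, u j ≤ ∑ _j ∈ Finset.univ.erase i0, (m:ℤ) :=
              Finset.sum_le_sum fun i hi => le_of_lt (hu' i (Finset.ne_of_mem_erase hi)).2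
          _ = ((ℓ:ℤ)-1)*(m:ℤ) := by
              rw [Finset.sum_const, hcarderase, nsmul_eq_mul, hcast]
      have hsumt : ∑ j, t j = t i0 + ∑ j ∈ Finset.univ.erase i0, t j :=
        (Finset.add_sum_erase _ _ (Finset.mem_univ i0)).symm
      have hunn : ∀ i, 0 ≤ uval i0 t u i := by
        intro i
        by_cases hi : i = i0
        · subst hi
          simp only [uval, if_pos rfl, if_true]
          rw [hsumt]
          linarith [ht0.1]
        · simp only [uval, if_neg hi]
          exact (hu' i hi).1
      have hsZ : ((s:ℕ):ℤ) = 3*(ℓ:ℤ)*(m:ℤ) := by rw [hs]; push_cast; ring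
      have hmem : ∀ x : Fin ℓ → ℤ, (∀ i, 0 ≤ x i ∧ x i < (s:ℤ)) →
          x ∈ (↑F : Set (Fin ℓ → ℤ)) := by
        intro x hx
        rw [hF]
        apply Finset.mem_coe.mpr
        apply Finset.mem_union_left
        rw [hBox, Fintype.mem_piFinset]
        intro i; rw [Finset.mem_Ico]; exact hx i
      have hmem1 : a ∈ (↑F : Set (Fin ℓ → ℤ)) := by
        apply hmem
        intro i
        refine ⟨(ha' i).1, ?_⟩
        rw [hsZ]
        linarith [(ha' i).2, hm1]
      have hmem2 : a + t ∈ (↑F : Set (Fin ℓ → ℤ)) := by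
        apply hmem
        intro i
        rw [Pi.add_apply]
        constructor
        · linarith [(ha' i).1, htnn i]
        · rw [hsZ]
          by_cases hi : i = i0
          · subst hi; linarith [(ha' i0).2, ht0.2, hm1]
          · linarith [(ha' i).2, (ht' i hi).2, hm1]
      have hmem3 : a + t + uval i0 t u ∈ (↑F : Set (Fin ℓ → ℤ)) := by
        apply hmem
        intro i
        rw [Pi.add_apply, Pi.add_apply]
        constructor
        · linarith [(ha' i).1, htnn i, hunn i]
        · rw [hsZ]
          by_cases hi : i = i0
          · subst hi
            have huv : uval i0 t u i0 = (∑ j, t j) - ∑ j ∈ Finset.univ.erase i0, u j := by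
              simp [uval]
            rw [huv, hsumt]
            linarith [(ha' i0).2, ht0.2]
          · have huv : uval i0 t u i = u i := by simp [uval, hi]
            rw [huv]
            linarith [(ha' i).2, (ht' i hi).2, (hu' i hi).2, hm1]
      have hd1 : latticeDist a (a + t) = ∑ i, t i := latticeDist_add a t htnn
      have hd2 : latticeDist (a + t) (a + t + uval i0 t u) = ∑ i, t i := by
        rw [latticeDist_add (a + t) (uval i0 t u) hunn, sum_uval]
      have hd3 : latticeDist a (a + t + uval i0 t u) = 2 * ∑ i, t i := by
        rw [add_assoc, latticeDist_add a (t + uval i0 t u) (fun i => by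
          have := htnn i; have := hunn i
          rw [Pi.add_apply]; linarith)]
        rw [show ∑ i, (t + uval i0 t u) i = ∑ i, t i + ∑ i, uval i0 t u i by
          rw [← Finset.sum_add_distrib]; rfl]
        rw [sum_uval]
        ring
      exact ⟨hmem1, hmem2, hmem3, by rw [hd1, hd2], by rw [hd1, hd3]⟩
    calc m ^ (3*ℓ-1) = D.card := hDcard.symm
      _ = (↑D : Set ((Fin ℓ → ℤ) × (Fin ℓ → ℤ) × (Fin ℓ → ℤ))).ncard :=
          (Set.ncard_coe_finset D).symm
      _ = (G '' ↑D).ncard := (Set.ncard_image_of_injOn hinj).symm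
      _ ≤ _ := Set.ncard_le_ncard
          (by rintro _ ⟨p, hp, rfl⟩; exact hGsub p (Finset.mem_coe.mp hp)) hATfin

/-- For the lattice `ℤ^ℓ` with the `ℓ¹` metric, there is a constant `c_ℓ > 0` such that
`μ_n(ℤ^ℓ) ≥ c_ℓ · n^(3 − 1/ℓ)` for every positive integer `n`. -/
theorem mu_lattice_lower (ℓ : ℕ) (hℓ : 1 ≤ ℓ) :
    ∃ c : ℝ, 0 < c ∧ ∀ n : ℕ, 0 < n →
      ∃ A : Set (Fin ℓ → ℤ), A.Finite ∧ A.ncard = n ∧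
        c * (n : ℝ) ^ ((3 : ℝ) - 1 / ℓ) ≤ ((latticeAT A).ncard : ℝ) := by
  have hℓR : (1:ℝ) ≤ (ℓ:ℝ) := by exact_mod_cast hℓ
  have hℓR0 : (0:ℝ) < (ℓ:ℝ) := by linarith
  have hℓne : (ℓ:ℝ) ≠ 0 := ne_of_gt hℓR0
  refine ⟨1 / (6*(ℓ:ℝ))^(3*ℓ), by positivity, ?_⟩
  intro n hn
  have hnR : (0:ℝ) < n := by exact_mod_cast hn
  have hexp0 : (0:ℝ) ≤ 3 - 1/ℓ := by
    have h1 : 1/(ℓ:ℝ) ≤ 1 := by rw [div_le_one hℓR0]; exact hℓR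
    linarith
  set k : ℕ := ⌊(n:ℝ)^((1:ℝ)/ℓ)⌋₊ with hk
  set m : ℕ := k / (3*ℓ) with hm
  have h3ℓ : 0 < 3*ℓ := by omega
  have hkle : (k:ℝ) ≤ (n:ℝ)^((1:ℝ)/ℓ) := Nat.floor_le (Real.rpow_nonneg (le_of_lt hnR) _)
  have hkpow : k^ℓ ≤ n := by
    have h1 : ((k:ℝ))^ℓ ≤ ((n:ℝ)^((1:ℝ)/ℓ))^ℓ := pow_le_pow_left₀ (Nat.cast_nonneg k) hkle ℓ
    have h2 : ((n:ℝ)^((1:ℝ)/ℓ))^ℓ = n := by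
      rw [← Real.rpow_natCast ((n:ℝ)^((1:ℝ)/ℓ)) ℓ, ← Real.rpow_mul (le_of_lt hnR),
        one_div_mul_cancel hℓne, Real.rpow_one]
    rw [h2] at h1
    exact_mod_cast h1
  have hbox : (3*ℓ*m)^ℓ ≤ n := by
    refine le_trans (Nat.pow_le_pow_left ?_ ℓ) hkpow
    calc 3*ℓ*m = m*(3*ℓ) := by ring
      _ ≤ k := Nat.div_mul_le_self k (3*ℓ)
  obtain ⟨A, hfin, hcard, hdiag, hmain⟩ := lattice_construction ℓ m n hℓ hbox
  refine ⟨A, hfin, hcard, ?_⟩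
  have hcast31 : ((3*ℓ-1 : ℕ):ℝ) = 3*(ℓ:ℝ) - 1 := by
    have h31 : 1 ≤ 3*ℓ := by omega
    push_cast [Nat.cast_sub h31]
    ring
  have hpowid : (n:ℝ) ^ ((3:ℝ) - 1/ℓ) = ((n:ℝ)^((1:ℝ)/ℓ))^(3*ℓ-1) := by
    rw [← Real.rpow_natCast ((n:ℝ)^((1:ℝ)/ℓ)) (3*ℓ-1), ← Real.rpow_mul (le_of_lt hnR)]
    congr 1
    rw [hcast31]
    field_simp
  by_cases hbig : (6*ℓ)^ℓ ≤ n
  · -- large n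
    have h6k : 6*ℓ ≤ k := by
      rw [hk]
      apply Nat.le_floor
      have hc : (6*(ℓ:ℝ))^(ℓ:ℕ) ≤ (n:ℝ) := by exact_mod_cast hbig
      have heq : ((6*ℓ:ℕ):ℝ) = ((6*(ℓ:ℝ))^(ℓ:ℕ))^((1:ℝ)/ℓ) := by
        rw [← Real.rpow_natCast (6*(ℓ:ℝ)) ℓ, ← Real.rpow_mul (by positivity),
          mul_one_div_cancel hℓne, Real.rpow_one]
        push_cast
        ring
      rw [heq]
      exact Real.rpow_le_rpow (by positivity) hc (by positivity)
    have hm2 : 2 ≤ m := by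
      rw [hm, Nat.le_div_iff_mul_le h3ℓ]
      omega
    have hklt : k < 6*ℓ*m := by
      have h1 : k < (m+1)*(3*ℓ) := by
        rw [← Nat.div_lt_iff_lt_mul h3ℓ, ← hm]
        omega
      calc k < (m+1)*(3*ℓ) := h1
        _ ≤ (2*m)*(3*ℓ) := Nat.mul_le_mul_right _ (by omega)
        _ = 6*ℓ*m := by ring
    have hfloor : (n:ℝ)^((1:ℝ)/ℓ) ≤ 6*(ℓ:ℝ)*m := by
      have h2 : (n:ℝ)^((1:ℝ)/ℓ) < k + 1 := Nat.lt_floor_add_one _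
      have h3 : (k:ℕ) + 1 ≤ 6*ℓ*m := hklt
      have h4 : ((k:ℕ):ℝ) + 1 ≤ ((6*ℓ*m : ℕ):ℝ) := by exact_mod_cast h3
      push_cast at h4
      linarith
    have hle : (n:ℝ)^((3:ℝ)-1/ℓ) ≤ (6*(ℓ:ℝ)*m)^(3*ℓ-1) := by
      rw [hpowid]
      exact pow_le_pow_left₀ (Real.rpow_nonneg (le_of_lt hnR) _) hfloor _
    have hmain' : ((m:ℝ))^(3*ℓ-1) ≤ ((latticeAT A).ncard : ℝ) := by exact_mod_cast hmain
    have hmnn : (0:ℝ) ≤ (m:ℝ) := Nat.cast_nonneg m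
    calc 1/(6*(ℓ:ℝ))^(3*ℓ) * (n:ℝ)^((3:ℝ)-1/ℓ)
        ≤ 1/(6*(ℓ:ℝ))^(3*ℓ) * ((6*(ℓ:ℝ))^(3*ℓ-1) * (m:ℝ)^(3*ℓ-1)) := by
          rw [← mul_pow]
          exact mul_le_mul_of_nonneg_left hle (by positivity)
      _ ≤ (m:ℝ)^(3*ℓ-1) := by
          rw [div_mul_eq_mul_div, one_mul, div_le_iff₀ (by positivity)]
          rw [mul_comm ((6*(ℓ:ℝ))^(3*ℓ-1)) ((m:ℝ)^(3*ℓ-1))]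
          exact mul_le_mul_of_nonneg_left
            (pow_le_pow_right₀ (by linarith) (by omega)) (pow_nonneg hmnn _)
      _ ≤ _ := hmain'
  · -- small n
    push_neg at hbig
    have hnle : (n:ℝ) ≤ (6*(ℓ:ℝ))^(ℓ:ℕ) := by
      have : n ≤ (6*ℓ)^ℓ := le_of_lt hbig
      exact_mod_cast this
    have h1 : (n:ℝ)^((3:ℝ)-1/ℓ) ≤ (6*(ℓ:ℝ))^(3*ℓ-1) := by
      calc (n:ℝ)^((3:ℝ)-1/ℓ) ≤ ((6*(ℓ:ℝ))^(ℓ:ℕ))^((3:ℝ)-1/ℓ) :=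
            Real.rpow_le_rpow (le_of_lt hnR) hnle hexp0
        _ = (6*(ℓ:ℝ))^(3*ℓ-1) := by
            rw [← Real.rpow_natCast (6*(ℓ:ℝ)) ℓ, ← Real.rpow_mul (by positivity),
              ← Real.rpow_natCast (6*(ℓ:ℝ)) (3*ℓ-1)]
            congr 1
            rw [hcast31]
            field_simp
    have hdiag' : (n:ℝ) ≤ ((latticeAT A).ncard : ℝ) := by exact_mod_cast hdiag
    have hn1 : (1:ℝ) ≤ (n:ℝ) := by exact_mod_cast hn
    calc 1/(6*(ℓ:ℝ))^(3*ℓ) * (n:ℝ)^((3:ℝ)-1/ℓ)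
        ≤ 1/(6*(ℓ:ℝ))^(3*ℓ) * (6*(ℓ:ℝ))^(3*ℓ-1) := by
          exact mul_le_mul_of_nonneg_left h1 (by positivity)
      _ ≤ 1 := by
          rw [div_mul_eq_mul_div, one_mul, div_le_one (by positivity)]
          exact pow_le_pow_right₀ (by linarith) (by omega)
      _ ≤ (n:ℝ) := hn1
      _ ≤ _ := hdiag'
end

section
/- For every metric space M, every positive integer n, and every n-element subset A ⊆ M, |AT_M(A)| ≤ 2·⌊(n · ⌊(n−1)/2⌋ · ⌈(n−1)/2⌉)/2⌋ + n. -/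
open Finset

/-- A fixed-point-free involution on a finset forces even cardinality. -/
lemma even_card_of_involution {α : Type*} [DecidableEq α] (s : Finset α) (σ : α → α)
    (hmem : ∀ x ∈ s, σ x ∈ s) (hinv : ∀ x ∈ s, σ (σ x) = x) (hne : ∀ x ∈ s, σ x ≠ x) :
    Even s.card := by
  induction s using Finset.strongInduction with
  | _ s ih =>
    rcases s.eq_empty_or_nonempty with rfl | ⟨x, hx⟩
    · simp
    · have hσx := hmem x hx
      have hxne := hne x hx
      set s' := (s.erase x).erase (σ x) with hs'
      have hsub : s' ⊂ s := by
        refine Finset.ssubset_of_subset_of_ssubset ?_ (Finset.erase_ssubset hx)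
        exact Finset.erase_subset _ _
      have hmem' : ∀ y ∈ s', σ y ∈ s' := by
        intro y hy
        have hy1 : y ≠ σ x := Finset.ne_of_mem_erase hy
        have hy2 : y ≠ x := Finset.ne_of_mem_erase (Finset.mem_of_mem_erase hy)
        have hys : y ∈ s := Finset.mem_of_mem_erase (Finset.mem_of_mem_erase hy)
        have h1 : σ y ≠ σ x := by
          intro h
          have := congrArg σ h
          rw [hinv y hys, hinv x hx] at this
          exact hy2 this
        have h2 : σ y ≠ x := by
          intro h
          apply hy1
          rw [← h, hinv y hys]
        exact Finset.mem_erase.2 ⟨h1, Finset.mem_erase.2 ⟨h2, hmem y hys⟩⟩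
      have hinv' : ∀ y ∈ s', σ (σ y) = y := fun y hy =>
        hinv y (Finset.mem_of_mem_erase (Finset.mem_of_mem_erase hy))
      have hne' : ∀ y ∈ s', σ y ≠ y := fun y hy =>
        hne y (Finset.mem_of_mem_erase (Finset.mem_of_mem_erase hy))
      have heven := ih s' hsub hmem' hinv' hne'
      have hcard : s'.card = s.card - 2 := by
        rw [hs', Finset.card_erase_of_mem (Finset.mem_erase.2 ⟨hxne, hσx⟩),
          Finset.card_erase_of_mem hx]
        omega
      have h2le : 2 ≤ s.card := by
        have : ({x, σ x} : Finset α) ⊆ s := by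
          intro y hy
          rcases Finset.mem_insert.1 hy with rfl | hy
          · exact hx
          · rcases Finset.mem_singleton.1 hy with rfl
            exact hσx
        calc 2 = ({x, σ x} : Finset α).card := by
                rw [Finset.card_insert_of_notMem (by simp [Ne.symm hxne]), Finset.card_singleton]
             _ ≤ s.card := Finset.card_le_card this
      obtain ⟨k, hk⟩ := heven
      exact ⟨k + 1, by omega⟩


lemma mantel_arith (m : ℕ) (hm : 2 ≤ m) :
    (m - 2) / 2 * ((m - 1) / 2) + (m - 1) ≤ m / 2 * ((m + 1) / 2) := by
  rcases Nat.even_or_odd m with ⟨k, hk⟩ | ⟨k, hk⟩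
  · obtain ⟨j, rfl⟩ : ∃ j, k = j + 1 := ⟨k - 1, by omega⟩
    have h1 : (m - 2) / 2 = j := by omega
    have h2 : (m - 1) / 2 = j := by omega
    have h3 : m / 2 = j + 1 := by omega
    have h4 : (m + 1) / 2 = j + 1 := by omega
    have h5 : m - 1 = 2 * j + 1 := by omega
    rw [h1, h2, h3, h4, h5]
    nlinarith
  · obtain ⟨j, rfl⟩ : ∃ j, k = j + 1 := ⟨k - 1, by omega⟩
    have h1 : (m - 2) / 2 = j := by omega
    have h2 : (m - 1) / 2 = j + 1 := by omega
    have h3 : m / 2 = j + 1 := by omega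
    have h4 : (m + 1) / 2 = j + 2 := by omega
    have h5 : m - 1 = 2 * j + 2 := by omega
    rw [h1, h2, h3, h4, h5]
    nlinarith

/-- Mantel's theorem, counted over ordered pairs: if `R` is an antisymmetric relation
whose symmetrization is triangle-free on `s`, then the number of ordered pairs of `s ×ˢ s`
in `R` is at most `⌊m/2⌋ * ⌈m/2⌉` where `m = s.card`. -/
lemma mantel_ordered {α : Type*} [DecidableEq α] (R : α → α → Prop) [DecidableRel R]
    (hanti : ∀ x y, R x y → ¬ R y x) (s : Finset α)
    (htri : ∀ x ∈ s, ∀ y ∈ s, ∀ z ∈ s,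
      (R x y ∨ R y x) → (R y z ∨ R z y) → (R x z ∨ R z x) → False) :
    ((s ×ˢ s).filter (fun p => R p.1 p.2)).card ≤ s.card / 2 * ((s.card + 1) / 2) := by
  induction s using Finset.strongInduction with
  | _ s ih =>
    rcases ((s ×ˢ s).filter (fun p => R p.1 p.2)).eq_empty_or_nonempty with he | ⟨⟨u, v⟩, hp⟩
    · rw [he]; simp
    · rw [Finset.mem_filter, Finset.mem_product] at hp
      obtain ⟨⟨hu', hv'⟩, hR'⟩ := hp
      have hu : u ∈ s := hu'
      have hv : v ∈ s := hv'
      have hR : R u v := hR'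
      clear hu' hv' hR'
      have huv : u ≠ v := by rintro rfl; exact hanti _ _ hR hR
      set s' := (s.erase u).erase v with hs'
      have hus' : u ∉ s' := fun h => (Finset.notMem_erase u s) (Finset.mem_of_mem_erase h)
      have hvs' : v ∉ s' := Finset.notMem_erase v _
      have hsub : s' ⊂ s :=
        Finset.ssubset_of_subset_of_ssubset (Finset.erase_subset _ _) (Finset.erase_ssubset hu)
      have hcard' : s'.card = s.card - 2 := by
        rw [hs', Finset.card_erase_of_mem (Finset.mem_erase.2 ⟨Ne.symm huv, hv⟩),
          Finset.card_erase_of_mem hu]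
        omega
      have hm2 : 2 ≤ s.card := by
        have hss : ({u, v} : Finset α) ⊆ s := by
          intro y hy
          rcases Finset.mem_insert.1 hy with rfl | hy
          · exact hu
          · rcases Finset.mem_singleton.1 hy with rfl; exact hv
        calc 2 = ({u, v} : Finset α).card := by
              rw [Finset.card_insert_of_notMem (by simp [huv]), Finset.card_singleton]
          _ ≤ s.card := Finset.card_le_card hss
      -- the touching set
      set T := ((s ×ˢ s).filter (fun p => R p.1 p.2 ∧ (p.1 = u ∨ p.1 = v ∨ p.2 = u ∨ p.2 = v)))
        with hT
      have hsplit : ((s ×ˢ s).filter (fun p => R p.1 p.2)) ⊆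
          ((s' ×ˢ s').filter (fun p => R p.1 p.2)) ∪ T := by
        intro p hps
        rw [Finset.mem_filter, Finset.mem_product] at hps
        obtain ⟨⟨h1, h2⟩, h3⟩ := hps
        by_cases hc : p.1 = u ∨ p.1 = v ∨ p.2 = u ∨ p.2 = v
        · exact Finset.mem_union_right _ (by
            rw [hT, Finset.mem_filter, Finset.mem_product]; exact ⟨⟨h1, h2⟩, h3, hc⟩)
        · push_neg at hc
          obtain ⟨hc1, hc2, hc3, hc4⟩ := hc
          refine Finset.mem_union_left _ ?_
          rw [Finset.mem_filter, Finset.mem_product]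
          exact ⟨⟨Finset.mem_erase.2 ⟨hc2, Finset.mem_erase.2 ⟨hc1, h1⟩⟩,
            Finset.mem_erase.2 ⟨hc4, Finset.mem_erase.2 ⟨hc3, h2⟩⟩⟩, h3⟩
      have htri' : ∀ x ∈ s', ∀ y ∈ s', ∀ z ∈ s',
          (R x y ∨ R y x) → (R y z ∨ R z y) → (R x z ∨ R z x) → False := by
        intro x hx y hy z hz
        exact htri x (Finset.mem_of_mem_erase (Finset.mem_of_mem_erase hx))
          y (Finset.mem_of_mem_erase (Finset.mem_of_mem_erase hy))
          z (Finset.mem_of_mem_erase (Finset.mem_of_mem_erase hz))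
      have hc1 := ih s' hsub htri'
      rw [hcard'] at hc1
      -- bound on the touching set
      have hno : ∀ w ∈ s, (R u w ∨ R w u) → (R w v ∨ R v w) → False := by
        intro w hw h1 h2
        exact htri u hu w hw v hv h1 h2 (Or.inl hR)
      have hcT : T.card ≤ s.card - 1 := by
        have hTle : T.card ≤ (insert u s').card := by
          apply Finset.card_le_card_of_injOn
            (fun p => if p.1 = u ∨ p.1 = v then (if p.2 = u ∨ p.2 = v then u else p.2) else p.1)
          · -- maps into insert u s'
            intro p hps
            rw [hT, Finset.mem_coe, Finset.mem_filter, Finset.mem_product] at hps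
            obtain ⟨⟨h1, h2⟩, h3, h4⟩ := hps
            simp only [Finset.mem_coe]
            split_ifs with ha hb
            · exact Finset.mem_insert_self _ _
            · push_neg at hb
              exact Finset.mem_insert_of_mem (Finset.mem_erase.2 ⟨hb.2, Finset.mem_erase.2
                ⟨hb.1, h2⟩⟩)
            · push_neg at ha
              exact Finset.mem_insert_of_mem (Finset.mem_erase.2 ⟨ha.2, Finset.mem_erase.2
                ⟨ha.1, h1⟩⟩)
          · -- injective on T
            intro p hps q hqs hfe
            simp only [Finset.mem_coe] at hps hqs
            rw [hT, Finset.mem_filter, Finset.mem_product] at hps hqs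
            obtain ⟨⟨hp1, hp2⟩, hp3, hp4⟩ := hps
            obtain ⟨⟨hq1, hq2⟩, hq3, hq4⟩ := hqs
            dsimp only at hfe
            -- classification of touching pairs
            have hclass : ∀ r : α × α, r.1 ∈ s → r.2 ∈ s → R r.1 r.2 →
                (r.1 = u ∨ r.1 = v ∨ r.2 = u ∨ r.2 = v) →
                (∃ w, w ∈ s ∧ w ≠ u ∧ w ≠ v ∧
                  (if r.1 = u ∨ r.1 = v then (if r.2 = u ∨ r.2 = v then u else r.2) else r.1) = w ∧
                  (r = (w, u) ∨ r = (u, w) ∨ r = (w, v) ∨ r = (v, w))) ∨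
                ((if r.1 = u ∨ r.1 = v then (if r.2 = u ∨ r.2 = v then u else r.2) else r.1) = u ∧
                  (r = (u, v) ∨ r = (v, u))) := by
              rintro ⟨x, y⟩ hx hy hr htouch
              have hxy : x ≠ y := by rintro rfl; exact hanti _ _ hr hr
              by_cases hxu : x = u
              · by_cases hyv : y = v
                · exact Or.inr ⟨by simp [hxu, hyv], Or.inl (by rw [hxu, hyv])⟩
                · have hyu : y ≠ u := fun h => hxy (by rw [hxu, h])
                  exact Or.inl ⟨y, hy, hyu, hyv, by simp [hxu, hyu, hyv],
                    Or.inr (Or.inl (by rw [hxu]))⟩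
              · by_cases hxv : x = v
                · by_cases hyu : y = u
                  · exact Or.inr ⟨by simp [hxu, hxv, hyu], Or.inr (by rw [hxv, hyu])⟩
                  · have hyv : y ≠ v := fun h => hxy (by rw [hxv, h])
                    exact Or.inl ⟨y, hy, hyu, hyv, by simp [hxu, hxv, hyu, hyv],
                      Or.inr (Or.inr (Or.inr (by rw [hxv])))⟩
                · have hy' : y = u ∨ y = v := by
                    rcases htouch with h | h | h | h
                    exacts [absurd h hxu, absurd h hxv, Or.inl h, Or.inr h]
                  refine Or.inl ⟨x, hx, hxu, hxv, by simp [hxu, hxv], ?_⟩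
                  rcases hy' with h | h
                  · exact Or.inl (by rw [h])
                  · exact Or.inr (Or.inr (Or.inl (by rw [h])))
            rcases hclass p hp1 hp2 hp3 hp4 with ⟨w, hw, hwu, hwv, hfp, hpcases⟩ |
              ⟨hfp, hpcases⟩ <;>
              rcases hclass q hq1 hq2 hq3 hq4 with ⟨w', hw', hwu', hwv', hfq, hqcases⟩ |
                ⟨hfq, hqcases⟩
            · -- both "left" cases, with the same middle w
              have hww : w = w' := by rw [← hfp, ← hfq, hfe]
              subst hww
              clear hfe hfp hfq hp4 hq4 hsplit hc1 htri'
              rcases hpcases with rfl | rfl | rfl | rfl <;> rcases hqcases with h | h | h | h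
              · exact h.symm
              · exact absurd (show R u w by rw [h] at hq3; exact hq3) (hanti _ _ hp3)
              · exact absurd (hno w hw (Or.inr hp3)
                  (Or.inl (show R w v by rw [h] at hq3; exact hq3))) not_false
              · exact absurd (hno w hw (Or.inr hp3)
                  (Or.inr (show R v w by rw [h] at hq3; exact hq3))) not_false
              · exact absurd hp3 (hanti _ _ (show R w u by rw [h] at hq3; exact hq3))
              · exact h.symm
              · exact absurd (hno w hw (Or.inl hp3)
                  (Or.inl (show R w v by rw [h] at hq3; exact hq3))) not_false
              · exact absurd (hno w hw (Or.inl hp3)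
                  (Or.inr (show R v w by rw [h] at hq3; exact hq3))) not_false
              · exact absurd (hno w hw (Or.inr (show R w u by rw [h] at hq3; exact hq3))
                  (Or.inl hp3)) not_false
              · exact absurd (hno w hw (Or.inl (show R u w by rw [h] at hq3; exact hq3))
                  (Or.inl hp3)) not_false
              · exact h.symm
              · exact absurd (show R v w by rw [h] at hq3; exact hq3) (hanti _ _ hp3)
              · exact absurd (hno w hw (Or.inr (show R w u by rw [h] at hq3; exact hq3))
                  (Or.inr hp3)) not_false
              · exact absurd (hno w hw (Or.inl (show R u w by rw [h] at hq3; exact hq3))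
                  (Or.inr hp3)) not_false
              · exact absurd (show R w v by rw [h] at hq3; exact hq3) (hanti _ _ hp3)
              · exact h.symm
            · exact absurd (by rw [hfe, hfq] at hfp; exact hfp : u = w) (Ne.symm hwu)
            · exact absurd (by rw [← hfe, hfp] at hfq; exact hfq : u = w') (Ne.symm hwu')
            · rcases hpcases with rfl | rfl <;> rcases hqcases with h | h
              · exact h.symm
              · exact absurd (show R v u by rw [h] at hq3; exact hq3) (hanti _ _ hp3)
              · exact absurd (show R u v by rw [h] at hq3; exact hq3) (hanti _ _ hp3)
              · exact h.symm
        rw [Finset.card_insert_of_notMem hus'] at hTle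
        omega
      calc ((s ×ˢ s).filter (fun p => R p.1 p.2)).card
          ≤ ((s' ×ˢ s').filter (fun p => R p.1 p.2)).card + T.card :=
            le_trans (Finset.card_le_card hsplit) (Finset.card_union_le _ _)
        _ ≤ (s.card - 2) / 2 * ((s.card - 2 + 1) / 2) + (s.card - 1) := Nat.add_le_add hc1 hcT
        _ ≤ (s.card - 2) / 2 * ((s.card - 1) / 2) + (s.card - 1) := by
            have : s.card - 2 + 1 = s.card - 1 := by omega
            rw [this]
        _ ≤ s.card / 2 * ((s.card + 1) / 2) := mantel_arith s.card hm2


/-- `(a,b,c)` is a 3-term arithmetic progression in the metric space `M`: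
`d(a,b) = d(b,c) = (1/2)·d(a,c)`. -/
def IsAP3 {M : Type*} [MetricSpace M] (a b c : M) : Prop :=
  dist a b = dist b c ∧ dist b c = dist a c / 2

/-- The set of 3-term arithmetic progressions with all entries in `A`. -/
def AT {M : Type*} [MetricSpace M] (A : Set M) : Set (M × M × M) :=
  {p | p.1 ∈ A ∧ p.2.1 ∈ A ∧ p.2.2 ∈ A ∧ IsAP3 p.1 p.2.1 p.2.2}

/-- For every metric space `M` and every `n`-element subset `A ⊆ M`,
`|AT_M(A)| ≤ 2⌊(n·⌊(n−1)/2⌋·⌈(n−1)/2⌉)/2⌋ + n`. -/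
theorem AT_general_upper {M : Type*} [MetricSpace M] (n : ℕ) (hn : 0 < n)
    (A : Set M) (hA : A.Finite) (hcard : A.ncard = n) :
    (AT A).ncard ≤ 2 * ((n * ((n - 1) / 2) * (n / 2)) / 2) + n := by
  classical
  set s : Finset M := hA.toFinset with hsdef
  have hmem_s : ∀ x, x ∈ s ↔ x ∈ A := fun x => hA.mem_toFinset
  have hscard : s.card = n := by
    rw [← hcard, ← Set.ncard_coe_finset s, hsdef, hA.coe_toFinset]
  set F : Finset (M × M × M) := (s ×ˢ s ×ˢ s).filter (fun p => IsAP3 p.1 p.2.1 p.2.2) with hF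
  have hATF : AT A = ↑F := by
    ext p
    simp only [AT, Set.mem_setOf_eq, hF, Finset.coe_filter, Finset.mem_product, hmem_s]
    tauto
  have hncard : (AT A).ncard = F.card := by rw [hATF]; exact Set.ncard_coe_finset F
  -- split into trivial and nontrivial progressions
  set F₀ : Finset (M × M × M) := F.filter (fun p => p.1 = p.2.2) with hF₀
  set F₁ : Finset (M × M × M) := F.filter (fun p => ¬ p.1 = p.2.2) with hF₁
  have hsplit : F₀.card + F₁.card = F.card := Finset.card_filter_add_card_filter_not _
  -- trivial progressions: at most n
  have hF₀card : F₀.card ≤ n := by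
    have hsub : F₀ ⊆ s.image (fun a => (a, a, a)) := by
      intro p hp
      simp only [hF₀, hF, Finset.mem_filter, Finset.mem_product] at hp
      obtain ⟨⟨⟨h1, h2, h3⟩, h4, h5⟩, heq⟩ := hp
      have hd1 : dist p.1 p.2.2 = 0 := by rw [heq]; exact dist_self _
      have hd2 : dist p.2.1 p.2.2 = 0 := by rw [h5, hd1]; norm_num
      have hd3 : dist p.1 p.2.1 = 0 := by rw [h4, hd2]
      have he1 : p.2.1 = p.2.2 := dist_eq_zero.1 hd2
      have he2 : p.1 = p.2.1 := dist_eq_zero.1 hd3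
      refine Finset.mem_image.2 ⟨p.1, h1, ?_⟩
      rw [Prod.ext_iff, Prod.ext_iff]
      exact ⟨rfl, he2, he2.trans he1⟩
    calc F₀.card ≤ (s.image (fun a => (a, a, a))).card := Finset.card_le_card hsub
      _ ≤ s.card := Finset.card_image_le
      _ = n := hscard
  -- nontrivial progressions have even count, via the reversal involution
  have hF₁even : Even F₁.card := by
    apply even_card_of_involution F₁ (fun p => (p.2.2, p.2.1, p.1))
    · intro p hp
      simp only [hF₁, hF, Finset.mem_filter, Finset.mem_product] at hp ⊢
      obtain ⟨⟨⟨h1, h2, h3⟩, h4, h5⟩, hne⟩ := hp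
      refine ⟨⟨⟨h3, h2, h1⟩, ?_, ?_⟩, ?_⟩
      · rw [dist_comm p.2.2 p.2.1, dist_comm p.2.1 p.1]; exact h4.symm
      · rw [dist_comm p.2.1 p.1, dist_comm p.2.2 p.1, h4]; exact h5
      · intro h; exact hne h.symm
    · intro p _; rfl
    · intro p hp h
      rw [hF₁, Finset.mem_filter] at hp
      exact hp.2 (congrArg Prod.fst h).symm
  -- count nontrivial progressions fiberwise over the first coordinate
  have hfiber : F₁.card = ∑ a ∈ s, (F₁.filter (fun p => p.1 = a)).card := by
    apply Finset.card_eq_sum_card_fiberwise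
    intro p hp
    simp only [hF₁, hF, Finset.mem_coe, Finset.mem_filter, Finset.mem_product] at hp
    exact hp.1.1.1
  -- each fiber is bounded via the Mantel-type lemma
  have hfiber_bound : ∀ a ∈ s, (F₁.filter (fun p => p.1 = a)).card ≤ (n - 1) / 2 * (n / 2) := by
    intro a ha
    set t : Finset M := s.erase a with ht
    have htcard : t.card = n - 1 := by rw [ht, Finset.card_erase_of_mem ha, hscard]
    set R : M → M → Prop := fun b c => IsAP3 a b c ∧ a ≠ c with hR
    have hanti : ∀ x y, R x y → ¬ R y x := by
      rintro x y ⟨⟨h1, h2⟩, hne⟩ ⟨⟨h1', h2'⟩, hne'⟩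
      have hc : dist y x = dist x y := dist_comm y x
      have h0 : dist a y = 0 := by linarith
      exact hne (dist_eq_zero.1 h0)
    have hkey : ∀ x y, (R x y ∨ R y x) →
        (dist a x = dist x y ∧ 2 * dist x y = dist a y ∧ 0 < dist a y) ∨
        (dist a y = dist x y ∧ 2 * dist x y = dist a x ∧ 0 < dist a x) := by
      rintro x y (⟨⟨h1, h2⟩, hne⟩ | ⟨⟨h1, h2⟩, hne⟩)
      · exact Or.inl ⟨h1, by linarith, dist_pos.2 hne⟩
      · have hc : dist y x = dist x y := dist_comm y x
        exact Or.inr ⟨by linarith, by linarith, dist_pos.2 hne⟩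
    have htri : ∀ x ∈ t, ∀ y ∈ t, ∀ z ∈ t,
        (R x y ∨ R y x) → (R y z ∨ R z y) → (R x z ∨ R z x) → False := by
      intro x _ y _ z _ e1 e2 e3
      rcases hkey x y e1 with ⟨k1, k2, k3⟩ | ⟨k1, k2, k3⟩ <;>
        rcases hkey y z e2 with ⟨l1, l2, l3⟩ | ⟨l1, l2, l3⟩ <;>
          rcases hkey x z e3 with ⟨m1, m2, m3⟩ | ⟨m1, m2, m3⟩ <;> linarith
    have hinj : (F₁.filter (fun p => p.1 = a)).card ≤
        ((t ×ˢ t).filter (fun q => R q.1 q.2)).card := by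
      apply Finset.card_le_card_of_injOn (fun p => (p.2.1, p.2.2))
      · intro p hp
        simp only [hF₁, hF, Finset.mem_coe, Finset.mem_filter, Finset.mem_product] at hp
        obtain ⟨⟨⟨⟨h1, h2, h3⟩, h4, h5⟩, hne⟩, ha1⟩ := hp
        have hac : a ≠ p.2.2 := by rw [← ha1]; exact hne
        have hpos : 0 < dist a p.2.2 := dist_pos.2 hac
        have hpos2 : 0 < dist p.2.1 p.2.2 := by rw [ha1] at h5; rw [h5]; linarith
        have hpos1 : 0 < dist a p.2.1 := by rw [ha1] at h4; rw [h4]; exact hpos2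
        have hab : p.2.1 ≠ a := Ne.symm (dist_pos.1 hpos1)
        have hac' : p.2.2 ≠ a := Ne.symm hac
        simp only [Finset.mem_coe]
        rw [Finset.mem_filter, Finset.mem_product]
        refine ⟨⟨Finset.mem_erase.2 ⟨hab, h2⟩, Finset.mem_erase.2 ⟨hac', h3⟩⟩, ?_⟩
        rw [hR]
        refine ⟨?_, hac⟩
        rw [← ha1]; exact ⟨h4, h5⟩
      · intro p hp q hq heq
        simp only [Finset.mem_coe, Finset.mem_filter] at hp hq
        have h1 : p.1 = q.1 := by rw [hp.2, hq.2]
        have h2 : p.2.1 = q.2.1 := congrArg Prod.fst heq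
        have h3 : p.2.2 = q.2.2 := congrArg Prod.snd heq
        rw [Prod.ext_iff, Prod.ext_iff]
        exact ⟨h1, h2, h3⟩
    calc (F₁.filter (fun p => p.1 = a)).card
        ≤ ((t ×ˢ t).filter (fun q => R q.1 q.2)).card := hinj
      _ ≤ t.card / 2 * ((t.card + 1) / 2) := mantel_ordered R hanti t htri
      _ = (n - 1) / 2 * (n / 2) := by
          rw [htcard]
          congr 1
          omega
  have hF₁le : F₁.card ≤ n * ((n - 1) / 2 * (n / 2)) := by
    rw [hfiber]
    calc ∑ a ∈ s, (F₁.filter (fun p => p.1 = a)).card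
        ≤ ∑ _a ∈ s, (n - 1) / 2 * (n / 2) := Finset.sum_le_sum hfiber_bound
      _ = n * ((n - 1) / 2 * (n / 2)) := by rw [Finset.sum_const, hscard, smul_eq_mul]
  -- use evenness to round down
  have hF₁le2 : F₁.card ≤ 2 * ((n * ((n - 1) / 2) * (n / 2)) / 2) := by
    obtain ⟨k, hk⟩ := hF₁even
    have hX : n * ((n - 1) / 2) * (n / 2) = n * ((n - 1) / 2 * (n / 2)) := by ring
    rw [hX]
    set X := n * ((n - 1) / 2 * (n / 2)) with hXdef
    have hk2 : k * 2 ≤ X := by rw [Nat.mul_two]; rw [hk] at hF₁le; exact hF₁le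
    have hkX : k ≤ X / 2 := (Nat.le_div_iff_mul_le (by norm_num)).2 hk2
    calc F₁.card = k + k := hk
      _ = 2 * k := (Nat.two_mul k).symm
      _ ≤ 2 * (X / 2) := Nat.mul_le_mul_left 2 hkX
  calc (AT A).ncard = F.card := hncard
    _ = F₀.card + F₁.card := hsplit.symm
    _ ≤ n + 2 * ((n * ((n - 1) / 2) * (n / 2)) / 2) := Nat.add_le_add hF₀card hF₁le2
    _ = 2 * ((n * ((n - 1) / 2) * (n / 2)) / 2) + n := Nat.add_comm _ _
end

section
/- There exists a metric space M₀ such that for every positive integer n, μ_n(M₀) = (n−2)·⌊n/2⌋·⌈n/2⌉ + n (as an integer). (Such a space is the complete bipartite graph with two infinite parts L and R, with the graph metric: distinct points in the same part are at distance 2, and points in different parts are at distance 1.) -/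
def Pt : Type := Bool × ℕ

instance : DecidableEq Pt := inferInstanceAs (DecidableEq (Bool × ℕ))
instance : TopologicalSpace Pt := ⊥
instance : DiscreteTopology Pt := ⟨rfl⟩

noncomputable def ptDist (x y : Pt) : ℝ :=
  if x = y then 0 else if x.1 = y.1 then 2 else 1

noncomputable instance Pt.metricSpace : MetricSpace Pt :=
  MetricSpace.ofDistTopology ptDist
    (fun x => by simp [ptDist])
    (fun x y => by
      unfold ptDist
      split_ifs with h1 h2 h3 h4 h5 <;> simp_all [eq_comm])
    (fun x y z => by
      unfold ptDist
      split_ifs <;> simp_all <;> norm_num)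
    (fun s => by
      constructor
      · intro _ x hx
        refine ⟨1, one_pos, fun y hy => ?_⟩
        unfold ptDist at hy
        split_ifs at hy with h1 h2 <;> first | (subst h1; exact hx) | norm_num at hy
      · intro _; exact isOpen_discrete s)
    (fun x y h => by
      unfold ptDist at h
      split_ifs at h <;> simp_all)

lemma Pt.dist_def (x y : Pt) : dist x y = ptDist x y := rfl

lemma isAP3_iff (a b c : Pt) :
    IsAP3 a b c ↔ (a = b ∧ b = c) ∨ (a.1 = c.1 ∧ a ≠ c ∧ b.1 ≠ a.1) := by
  unfold IsAP3
  rw [Pt.dist_def, Pt.dist_def, Pt.dist_def]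
  unfold ptDist
  split_ifs <;> constructor <;> intro h <;> simp_all <;> norm_num at * <;> simp_all [eq_comm] <;> tauto

open Finset

noncomputable def atF (T : Finset Pt) : Finset (Pt × Pt × Pt) :=
  T.image (fun a => (a,a,a)) ∪
  (((T.filter (fun x : Pt => x.1 = true)).offDiag ×ˢ (T.filter (fun x : Pt => x.1 = false))).image
    (fun x => (x.1.1, x.2, x.1.2))) ∪
  (((T.filter (fun x : Pt => x.1 = false)).offDiag ×ˢ (T.filter (fun x : Pt => x.1 = true))).image
    (fun x => (x.1.1, x.2, x.1.2)))

lemma AT_eq (T : Finset Pt) : AT (↑T : Set Pt) = ↑(atF T) := by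
  ext ⟨a, b, c⟩
  simp only [AT, Set.mem_setOf_eq, isAP3_iff, atF, coe_union, Set.mem_union, coe_image,
    Set.mem_image, mem_coe, mem_product, mem_offDiag, mem_filter]
  constructor
  · rintro ⟨ha, hb, hc, (⟨rfl, rfl⟩ | ⟨h1, h2, h3⟩)⟩
    · exact Or.inl (Or.inl ⟨a, ha, rfl⟩)
    · rcases Bool.eq_false_or_eq_true a.1 with h | h
      · refine Or.inl (Or.inr ⟨((a, c), b), ⟨⟨⟨ha, h⟩, ⟨hc, h1 ▸ h⟩, h2⟩, hb, by simp_all⟩, rfl⟩)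
      · refine Or.inr ⟨((a, c), b), ⟨⟨⟨ha, h⟩, ⟨hc, h1 ▸ h⟩, h2⟩, hb, by simp_all⟩, rfl⟩
  · rintro ((⟨x, hx, h⟩ | ⟨⟨⟨x, y⟩, z⟩, ⟨⟨⟨hx, hx1⟩, ⟨hy, hy1⟩, hxy⟩, hz, hz1⟩, h⟩) |
      ⟨⟨⟨x, y⟩, z⟩, ⟨⟨⟨hx, hx1⟩, ⟨hy, hy1⟩, hxy⟩, hz, hz1⟩, h⟩)
    · rw [Prod.ext_iff] at h
      obtain ⟨rfl, h⟩ := h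
      rw [Prod.ext_iff] at h
      obtain ⟨rfl, rfl⟩ := h
      exact ⟨hx, hx, hx, Or.inl ⟨rfl, rfl⟩⟩
    all_goals (
      rw [Prod.ext_iff] at h
      obtain ⟨rfl, h⟩ := h
      rw [Prod.ext_iff] at h
      obtain ⟨rfl, rfl⟩ := h
      exact ⟨hx, hz, hy, Or.inr ⟨by simp_all, hxy, by simp_all⟩⟩)

lemma atF_card (T : Finset Pt) :
    (atF T).card = T.card +
      ((T.filter (fun x : Pt => x.1 = true)).card * ((T.filter (fun x : Pt => x.1 = true)).card - 1)
        * (T.filter (fun x : Pt => x.1 = false)).card +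
       (T.filter (fun x : Pt => x.1 = false)).card * ((T.filter (fun x : Pt => x.1 = false)).card - 1)
        * (T.filter (fun x : Pt => x.1 = true)).card) := by
  set L := T.filter (fun x : Pt => x.1 = true) with hL
  set R := T.filter (fun x : Pt => x.1 = false) with hR
  have hinj : Function.Injective (fun x : (Pt × Pt) × Pt => (x.1.1, x.2, x.1.2)) := by
    rintro ⟨⟨a, c⟩, b⟩ ⟨⟨a', c'⟩, b'⟩ h
    simp_all
  have key : ∀ (U V : Finset Pt) (p : Pt × Pt × Pt),
      p ∈ (U.offDiag ×ˢ V).image (fun x => (x.1.1, x.2, x.1.2)) →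
      p.1 ∈ U ∧ p.2.2 ∈ U ∧ p.2.1 ∈ V ∧ p.1 ≠ p.2.2 := by
    intro U V p hp
    simp only [mem_image, mem_product, mem_offDiag] at hp
    obtain ⟨x, ⟨⟨h1, h2, h3⟩, h4⟩, rfl⟩ := hp
    exact ⟨h1, h2, h4, h3⟩
  have hd1 : Disjoint (T.image (fun a => (a,a,a)))
      ((L.offDiag ×ˢ R).image (fun x => (x.1.1, x.2, x.1.2))) := by
    rw [Finset.disjoint_left]
    rintro p hp hq
    obtain ⟨_, _, _, hne⟩ := key _ _ _ hq
    simp only [mem_image] at hp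
    obtain ⟨a, _, rfl⟩ := hp
    exact hne rfl
  have hd2 : Disjoint (T.image (fun a => (a,a,a)))
      ((R.offDiag ×ˢ L).image (fun x => (x.1.1, x.2, x.1.2))) := by
    rw [Finset.disjoint_left]
    rintro p hp hq
    obtain ⟨_, _, _, hne⟩ := key _ _ _ hq
    simp only [mem_image] at hp
    obtain ⟨a, _, rfl⟩ := hp
    exact hne rfl
  have hd3 : Disjoint ((L.offDiag ×ˢ R).image (fun x => (x.1.1, x.2, x.1.2)))
      ((R.offDiag ×ˢ L).image (fun x => (x.1.1, x.2, x.1.2))) := by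
    rw [Finset.disjoint_left]
    rintro p hp hq
    obtain ⟨h1, -, -, -⟩ := key _ _ _ hp
    obtain ⟨h2, -, -, -⟩ := key _ _ _ hq
    rw [hL, mem_filter] at h1
    rw [hR, mem_filter] at h2
    simp_all
  rw [atF, union_assoc, card_union_of_disjoint (by rw [disjoint_union_right]; exact ⟨hd1, hd2⟩),
    card_union_of_disjoint hd3, card_image_of_injective _ hinj, card_image_of_injective _ hinj,
    card_image_of_injective _ (fun a b h => (Prod.ext_iff.mp h).1),
    card_product, card_product, offDiag_card, offDiag_card]
  have e : ∀ m : ℕ, m * m - m = m * (m - 1) := by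
    intro m
    cases m with
    | zero => simp
    | succ k => rw [Nat.succ_sub_one, Nat.mul_succ, Nat.add_sub_cancel]
  rw [e, e]

lemma sum_eq (p q : ℕ) : p * (p - 1) * q + q * (q - 1) * p = p * q * (p + q - 2) := by
  cases p with
  | zero => simp
  | succ p =>
    cases q with
    | zero => simp
    | succ q =>
      have h : p + 1 + (q + 1) - 2 = p + q := by omega
      rw [h, Nat.succ_sub_one, Nat.succ_sub_one]
      ring

lemma pq_le_aux (p q : ℕ) (h : p ≤ q) : p * q ≤ ((p + q) / 2) * ((p + q + 1) / 2) := by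
  obtain ⟨a, ha⟩ : ∃ a, (p + q) / 2 = a := ⟨_, rfl⟩
  obtain ⟨b, hb⟩ : ∃ b, (p + q + 1) / 2 = b := ⟨_, rfl⟩
  rw [ha, hb]
  have key : (p:ℤ) * q ≤ (a:ℤ) * b := by
    nlinarith [mul_nonneg (show (0:ℤ) ≤ (a:ℤ) - p by omega) (show (0:ℤ) ≤ (b:ℤ) - p by omega),
      show (p:ℤ) + q = (a:ℤ) + b by omega]
  exact_mod_cast key

lemma pq_le (p q : ℕ) : p * q ≤ ((p + q) / 2) * ((p + q + 1) / 2) := by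
  rcases le_total p q with h | h
  · exact pq_le_aux p q h
  · have := pq_le_aux q p h
    rwa [mul_comm, add_comm q p] at this

lemma filter_parts (T : Finset Pt) :
    (T.filter (fun x : Pt => x.1 = true)).card + (T.filter (fun x : Pt => x.1 = false)).card
      = T.card := by
  have h : T.filter (fun x : Pt => x.1 = false) = T.filter (fun x : Pt => ¬ x.1 = true) := by
    apply filter_congr
    intro x _
    simp
  rw [h]
  exact Finset.card_filter_add_card_filter_not _

/-- There is a metric space `M₀` such that for every positive integer `n`,
`μ_n(M₀) = (n−2)·⌊n/2⌋·⌈n/2⌉ + n`. -/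
theorem exists_metric_space_mu_eq :
    ∃ (M₀ : Type) (_ : MetricSpace M₀),
      ∀ n : ℕ, 0 < n →
        IsGreatest {k : ℕ | ∃ A : Set M₀, A.Finite ∧ A.ncard = n ∧ (AT A).ncard = k}
          ((n - 2) * (n / 2) * ((n + 1) / 2) + n) := by
  refine ⟨Pt, Pt.metricSpace, fun n hn => ⟨?_, ?_⟩⟩
  · -- membership
    set T : Finset Pt := (Finset.range (n / 2)).image (fun i => (id (true, i) : Pt)) ∪
      (Finset.range ((n + 1) / 2)).image (fun i => (id (false, i) : Pt)) with hT
    have hinj1 : Function.Injective (fun i : ℕ => (id (true, i) : Pt)) := by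
      intro a b h
      exact (Prod.ext_iff.mp h).2
    have hinj2 : Function.Injective (fun i : ℕ => (id (false, i) : Pt)) := by
      intro a b h
      exact (Prod.ext_iff.mp h).2
    have hft : T.filter (fun x : Pt => x.1 = true)
        = (Finset.range (n / 2)).image (fun i => (id (true, i) : Pt)) := by
      ext x
      simp only [hT, mem_filter, mem_union, mem_image, mem_range]
      constructor
      · rintro ⟨(⟨i, hi, rfl⟩ | ⟨i, hi, rfl⟩), hx⟩
        · exact ⟨i, hi, rfl⟩
        · cases hx
      · rintro ⟨i, hi, rfl⟩
        exact ⟨Or.inl ⟨i, hi, rfl⟩, rfl⟩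
    have hff : T.filter (fun x : Pt => x.1 = false)
        = (Finset.range ((n + 1) / 2)).image (fun i => (id (false, i) : Pt)) := by
      ext x
      simp only [hT, mem_filter, mem_union, mem_image, mem_range]
      constructor
      · rintro ⟨(⟨i, hi, rfl⟩ | ⟨i, hi, rfl⟩), hx⟩
        · cases hx
        · exact ⟨i, hi, rfl⟩
      · rintro ⟨i, hi, rfl⟩
        exact ⟨Or.inr ⟨i, hi, rfl⟩, rfl⟩
    have hcT : T.card = n := by
      rw [← filter_parts T, hft, hff, card_image_of_injective _ hinj1,
        card_image_of_injective _ hinj2, card_range, card_range]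
      omega
    refine ⟨(↑T : Set Pt), T.finite_toSet, by rw [Set.ncard_coe_finset, hcT], ?_⟩
    rw [AT_eq, Set.ncard_coe_finset, atF_card, hft, hff, card_image_of_injective _ hinj1,
      card_image_of_injective _ hinj2, card_range, card_range, hcT, sum_eq,
      show n / 2 + (n + 1) / 2 = n from by omega]
    obtain ⟨a, ha⟩ : ∃ a, n / 2 = a := ⟨_, rfl⟩
    obtain ⟨b, hb⟩ : ∃ b, (n + 1) / 2 = b := ⟨_, rfl⟩
    obtain ⟨m, hm⟩ : ∃ m, n - 2 = m := ⟨_, rfl⟩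
    rw [ha, hb, hm]
    ring
  · -- upper bound
    rintro k ⟨A, hfin, hcard, rfl⟩
    rw [← Set.Finite.coe_toFinset hfin] at hcard ⊢
    rw [AT_eq, Set.ncard_coe_finset, atF_card, sum_eq]
    rw [Set.ncard_coe_finset] at hcard
    obtain ⟨p, hp⟩ : ∃ p, (hfin.toFinset.filter (fun x : Pt => x.1 = true)).card = p := ⟨_, rfl⟩
    obtain ⟨q, hq⟩ : ∃ q, (hfin.toFinset.filter (fun x : Pt => x.1 = false)).card = q := ⟨_, rfl⟩
    have hpq : p + q = n := by rw [← hp, ← hq, filter_parts, hcard]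
    rw [hp, hq, hcard, hpq]
    have h1 : p * q ≤ (n / 2) * ((n + 1) / 2) := by
      have := pq_le p q
      rwa [hpq] at this
    have h2 : p * q * (n - 2) ≤ (n / 2) * ((n + 1) / 2) * (n - 2) :=
      Nat.mul_le_mul_right _ h1
    have h3 : (n / 2) * ((n + 1) / 2) * (n - 2) = (n - 2) * (n / 2) * ((n + 1) / 2) := by
      obtain ⟨a, ha⟩ : ∃ a, n / 2 = a := ⟨_, rfl⟩
      obtain ⟨b, hb⟩ : ∃ b, (n + 1) / 2 = b := ⟨_, rfl⟩
      obtain ⟨m, hm⟩ : ∃ m, n - 2 = m := ⟨_, rfl⟩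
      rw [ha, hb, hm]
      ring
    omega
end
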